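/- arXiv:2309.09176 — 11 statements merged into one kernel-verified Lean document; each statement's English description precedes it below -/
import Mathlib

section
/- Let a < b be real numbers and let g : [a,b] → [a,b] be continuous and belong to the class 𝔊 with turning point m. Then g has a periodic point of odd period greater than 1 if and only if g²(m) > m and g³(m) > max Π, where Π = {x ∈ [a,m] : g(x) ∈ [a,m] and g²(x) = x}. -/
namespace Stmt0Aux

open Set Function

/-- Core: if f is continuous on [s,t] with f s = c, f t = d, c ≤ d, then some
subinterval maps *onto exactly* [c,d]. -/
lemma core_exact {f : ℝ → ℝ} {s t c d : ℝ} (hst : s ≤ t)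
    (hf : ContinuousOn f (Icc s t)) (hfs : f s = c) (hft : f t = d) (hcd : c ≤ d) :
    ∃ u v, s ≤ u ∧ u ≤ v ∧ v ≤ t ∧ f '' Icc u v = Icc c d := by
  classical
  set S : Set ℝ := Icc s t ∩ f ⁻¹' {c} with hSdef
  have hSclosed : IsClosed S := hf.preimage_isClosed_of_isClosed isClosed_Icc isClosed_singleton
  have hScomp : IsCompact S := (isCompact_Icc).of_isClosed_subset hSclosed inter_subset_left
  have hSne : S.Nonempty := ⟨s, ⟨le_refl s, hst⟩, by simpa [hfs]⟩
  set u := sSup S with hu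
  have huS : u ∈ S := hScomp.sSup_mem hSne
  have hust : u ∈ Icc s t := huS.1
  have hfu : f u = c := huS.2
  set T : Set ℝ := Icc u t ∩ f ⁻¹' {d} with hTdef
  have hfT : ContinuousOn f (Icc u t) := hf.mono (Icc_subset_Icc hust.1 le_rfl)
  have hTclosed : IsClosed T := hfT.preimage_isClosed_of_isClosed isClosed_Icc isClosed_singleton
  have hTcomp : IsCompact T := (isCompact_Icc).of_isClosed_subset hTclosed
    (inter_subset_left.trans (Icc_subset_Icc hust.1 le_rfl))
  have hTne : T.Nonempty := ⟨t, ⟨hust.2, le_refl t⟩, by simpa [hft]⟩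
  set v := sInf T with hv
  have hvT : v ∈ T := hTcomp.sInf_mem hTne
  have hvut : v ∈ Icc u t := hvT.1
  have hfv : f v = d := hvT.2
  refine ⟨u, v, hust.1, hvut.1, hvut.2, ?_⟩
  have hfuv : ContinuousOn f (Icc u v) := hf.mono (Icc_subset_Icc hust.1 hvut.2)
  apply Subset.antisymm
  · rintro _ ⟨x, hx, rfl⟩
    constructor
    · by_contra h
      push_neg at h
      have hxv : x ≤ v := hx.2
      have hc : c ∈ Icc (f x) (f v) := ⟨le_of_lt h, by rw [hfv]; exact hcd⟩
      obtain ⟨y, hy, hfy⟩ := intermediate_value_Icc hxv (hfuv.mono (Icc_subset_Icc hx.1 le_rfl)) hc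
      have hyS : y ∈ S := ⟨⟨hust.1.trans (hx.1.trans hy.1), hy.2.trans hvut.2⟩, by simpa [hfy]⟩
      have : y ≤ u := le_csSup hScomp.bddAbove hyS
      have hxy : x = y := le_antisymm hy.1 (this.trans hx.1)
      rw [← hxy] at hfy
      exact absurd hfy (ne_of_lt h)
    · by_contra h
      push_neg at h
      have hux : u ≤ x := hx.1
      have hd : d ∈ Icc (f u) (f x) := ⟨by rw [hfu]; exact hcd, le_of_lt h⟩
      obtain ⟨y, hy, hfy⟩ := intermediate_value_Icc hux (hfuv.mono (Icc_subset_Icc le_rfl hx.2)) hd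
      have hyT : y ∈ T := ⟨⟨hy.1, hy.2.trans (hx.2.trans hvut.2)⟩, by simpa [hfy]⟩
      have : v ≤ y := csInf_le hTcomp.bddBelow hyT
      have hxy : x = y := le_antisymm (hx.2.trans this) hy.2
      rw [← hxy] at hfy
      exact absurd hfy (ne_of_gt h)
  · have := intermediate_value_Icc hvut.1 hfuv
    rw [hfu, hfv] at this
    exact this

lemma core_exact' {f : ℝ → ℝ} {s t c d : ℝ} (hst : s ≤ t)
    (hf : ContinuousOn f (Icc s t)) (hfs : f s = d) (hft : f t = c) (hcd : c ≤ d) :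
    ∃ u v, s ≤ u ∧ u ≤ v ∧ v ≤ t ∧ f '' Icc u v = Icc c d := by
  set σ : ℝ → ℝ := fun x => s + t - x with hσ
  have hσmap : ∀ x ∈ Icc s t, σ x ∈ Icc s t := by
    intro x hx
    constructor <;> simp only [hσ] <;> linarith [hx.1, hx.2]
  have hσcont : ContinuousOn σ (Icc s t) := (continuous_const.sub continuous_id).continuousOn
  have hcomp : ContinuousOn (f ∘ σ) (Icc s t) := hf.comp hσcont hσmap
  have h1 : (f ∘ σ) s = c := by
    show f (s + t - s) = c
    rw [show s + t - s = t by ring, hft]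
  have h2 : (f ∘ σ) t = d := by
    show f (s + t - t) = d
    rw [show s + t - t = s by ring, hfs]
  obtain ⟨u, v, hsu, huv, hvt, himg⟩ := core_exact hst hcomp h1 h2 hcd
  refine ⟨s + t - v, s + t - u, by linarith, by linarith, by linarith, ?_⟩
  have : σ '' Icc u v = Icc (s + t - v) (s + t - u) := Set.image_const_sub_Icc (s + t) u v
  rw [← this, ← Set.image_comp, himg]

lemma exists_exact_subinterval {f : ℝ → ℝ} {u v c d : ℝ} (huv : u ≤ v)
    (hf : ContinuousOn f (Icc u v)) (hcd : c ≤ d) (hsub : Icc c d ⊆ f '' Icc u v) :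
    ∃ u' v', u ≤ u' ∧ u' ≤ v' ∧ v' ≤ v ∧ f '' Icc u' v' = Icc c d := by
  obtain ⟨s, hs, hfs⟩ := hsub (left_mem_Icc.2 hcd)
  obtain ⟨t, ht, hft⟩ := hsub (right_mem_Icc.2 hcd)
  rcases le_total s t with h | h
  · obtain ⟨u', v', h1, h2, h3, h4⟩ :=
      core_exact h (hf.mono (Icc_subset_Icc hs.1 ht.2)) hfs hft hcd
    exact ⟨u', v', hs.1.trans h1, h2, h3.trans ht.2, h4⟩
  · obtain ⟨u', v', h1, h2, h3, h4⟩ :=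
      core_exact' h (hf.mono (Icc_subset_Icc ht.1 hs.2)) hft hfs hcd
    exact ⟨u', v', ht.1.trans h1, h2, h3.trans hs.2, h4⟩

structure VS (a b m : ℝ) (g : ℝ → ℝ) : Prop where
  hab : a < b
  hcont : ContinuousOn g (Set.Icc a b)
  hmaps : Set.MapsTo g (Set.Icc a b) (Set.Icc a b)
  hma : a < m
  hmb : m < b
  hdec : StrictAntiOn g (Set.Icc a m)
  hinc : StrictMonoOn g (Set.Icc m b)
  hga : a < g a
  hgb : g b < b
  hbelow : ∀ x ∈ Set.Ico m b, g x < x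

namespace VS
variable {a b m : ℝ} {g : ℝ → ℝ} (H : VS a b m g)
include H

lemma am : a ≤ m := H.hma.le
lemma mb' : m ≤ b := H.hmb.le
lemma mIcc : m ∈ Icc a b := ⟨H.am, H.mb'⟩
lemma aIcc : a ∈ Icc a b := ⟨le_rfl, H.hab.le⟩
lemma bIcc : b ∈ Icc a b := ⟨H.hab.le, le_rfl⟩
lemma gmem {x : ℝ} (hx : x ∈ Icc a b) : g x ∈ Icc a b := H.hmaps hx

lemma anti {x y : ℝ} (hx : x ∈ Icc a m) (hy : y ∈ Icc a m) (h : x ≤ y) : g y ≤ g x := by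
  rcases eq_or_lt_of_le h with rfl | h
  · exact le_rfl
  · exact (H.hdec hx hy h).le

lemma mono {x y : ℝ} (hx : x ∈ Icc m b) (hy : y ∈ Icc m b) (h : x ≤ y) : g x ≤ g y := by
  rcases eq_or_lt_of_le h with rfl | h
  · exact le_rfl
  · exact (H.hinc hx hy h).le

lemma gmin {x : ℝ} (hx : x ∈ Icc a b) : g m ≤ g x := by
  rcases le_total x m with h | h
  · exact H.anti ⟨hx.1, h⟩ ⟨H.am, le_rfl⟩ h
  · exact H.mono ⟨le_rfl, H.mb'⟩ ⟨h, hx.2⟩ h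

lemma gm_lt : g m < m := H.hbelow m ⟨le_rfl, H.hmb⟩

lemma iter_mem {x : ℝ} (hx : x ∈ Icc a b) : ∀ n, g^[n] x ∈ Icc a b := by
  intro n
  induction n with
  | zero => exact hx
  | succ n ih => rw [Function.iterate_succ_apply']; exact H.gmem ih

lemma iter_cont : ∀ n, ContinuousOn (g^[n]) (Icc a b) := by
  intro n
  induction n with
  | zero => simpa using continuousOn_id
  | succ n ih =>
    rw [Function.iterate_succ]
    exact ih.comp H.hcont (fun x hx => H.gmem hx)

lemma fix_lt_m {x : ℝ} (hx : x ∈ Icc a b) (hfx : g x = x) : x < m := by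
  by_contra h
  push_neg at h
  rcases eq_or_lt_of_le hx.2 with rfl | hxb
  · exact absurd hfx (ne_of_lt H.hgb)
  · exact absurd hfx (ne_of_lt (H.hbelow x ⟨h, hxb⟩))


-- the set Π
omit H in
lemma it2 (x : ℝ) : g^[2] x = g (g x) := rfl
omit H in
lemma it3 (x : ℝ) : g^[3] x = g (g (g x)) := rfl

omit H in
lemma PPdef : {x : ℝ | x ∈ Set.Icc a m ∧ g x ∈ Set.Icc a m ∧ g^[2] x = x}
    = {x : ℝ | x ∈ Set.Icc a m ∧ g x ∈ Set.Icc a m ∧ g (g x) = x} := rfl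

lemma P_compact :
    IsCompact {x : ℝ | x ∈ Set.Icc a m ∧ g x ∈ Set.Icc a m ∧ g^[2] x = x} := by
  have hsub1 : Icc a m ⊆ Icc a b := Icc_subset_Icc le_rfl H.mb'
  have hc1 : ContinuousOn g (Icc a m) := H.hcont.mono hsub1
  set A := Icc a m ∩ g ⁻¹' (Icc a m) with hAdef
  have hA : IsClosed A :=
    hc1.preimage_isClosed_of_isClosed isClosed_Icc isClosed_Icc
  have hAab : A ⊆ Icc a b := fun x hx => hsub1 hx.1
  have hc2 : ContinuousOn (fun x => g (g x) - x) A := by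
    apply ContinuousOn.sub _ continuousOn_id
    exact H.hcont.comp (H.hcont.mono hAab) (fun x hx => hsub1 hx.2)
  have hPeq : {x : ℝ | x ∈ Set.Icc a m ∧ g x ∈ Set.Icc a m ∧ g^[2] x = x}
      = A ∩ (fun x => g (g x) - x) ⁻¹' {0} := by
    ext x
    simp only [hAdef, mem_setOf_eq, mem_inter_iff, mem_preimage, mem_singleton_iff, sub_eq_zero]
    rw [it2]
    tauto
  rw [hPeq]
  have hclosed : IsClosed (A ∩ (fun x => g (g x) - x) ⁻¹' {0}) :=
    hc2.preimage_isClosed_of_isClosed hA isClosed_singleton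
  exact isCompact_Icc.of_isClosed_subset hclosed (fun x hx => hAab hx.1)

lemma fix_exists : ∃ z ∈ Icc a m, g z = z := by
  have hc1 : ContinuousOn (fun x => g x - x) (Icc a m) :=
    (H.hcont.mono (Icc_subset_Icc le_rfl H.mb')).sub continuousOn_id
  have h0 : (0:ℝ) ∈ Icc (g m - m) (g a - a) :=
    ⟨by linarith [H.gm_lt], by linarith [H.hga]⟩
  obtain ⟨z, hz, hfz⟩ := intermediate_value_Icc' H.am hc1 h0
  exact ⟨z, hz, by linarith [sub_eq_zero.mp hfz] ⟩

lemma P_nonempty :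
    {x : ℝ | x ∈ Set.Icc a m ∧ g x ∈ Set.Icc a m ∧ g^[2] x = x}.Nonempty := by
  obtain ⟨z, hz, hgz⟩ := H.fix_exists
  exact ⟨z, hz, by rw [hgz]; exact hz, by rw [it2, hgz, hgz]⟩

lemma q_mem :
    sSup {x : ℝ | x ∈ Set.Icc a m ∧ g x ∈ Set.Icc a m ∧ g^[2] x = x}
      ∈ {x : ℝ | x ∈ Set.Icc a m ∧ g x ∈ Set.Icc a m ∧ g^[2] x = x} :=
  H.P_compact.sSup_mem H.P_nonempty

/-- orbit minimum: some positive iterate is ≤ m -/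
lemma exists_iter_le_m {x : ℝ} (hx : x ∈ Icc a b) {p : ℕ} (hp : 0 < p)
    (hper : g^[p] x = x) : ∃ k, 0 < k ∧ g^[k] x ≤ m := by
  by_contra h
  push_neg at h
  obtain ⟨k₀, hk₀, hmin⟩ := Finset.exists_min_image (Finset.range p)
    (fun k => g^[k+1] x) (Finset.nonempty_range_iff.2 (Nat.pos_iff_ne_zero.mp hp))
  set y := g^[k₀+1] x with hy
  have hym : m < y := h (k₀+1) (Nat.succ_pos _)
  have hyab : y ∈ Icc a b := H.iter_mem hx _
  have hgy : g y = g^[k₀+2] x := by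
    rw [hy, ← Function.iterate_succ_apply' g (k₀+1) x]
  have hyle : y ≤ g y := by
    rcases eq_or_lt_of_le (Nat.succ_le_of_lt (Finset.mem_range.mp hk₀)) with he | hlt
    · -- k₀ + 1 = p
      have : g y = g^[0+1] x := by
        rw [hgy, show k₀+2 = 1 + p by omega, Function.iterate_add_apply, hper]
      rw [this]
      exact hmin 0 (Finset.mem_range.mpr hp)
    · have : g y = g^[(k₀+1)+1] x := by rw [hgy]
      rw [this]
      exact hmin (k₀+1) (Finset.mem_range.mpr hlt)
  rcases eq_or_lt_of_le hyab.2 with he | hlt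
  · rw [he] at hyle; linarith [H.hgb, he ▸ hyle]
  · linarith [H.hbelow y ⟨hym.le, hlt⟩]

omit H in
/-- forward invariance propagates to the whole (periodic) orbit -/
lemma orbit_in_invariant {K : Set ℝ} (hK : ∀ y ∈ K, g y ∈ K) {x : ℝ} {p j : ℕ}
    (hp : 0 < p) (hper : g^[p] x = x) (hj : g^[j] x ∈ K) : ∀ k, g^[k] x ∈ K := by
  have fwd : ∀ t, g^[j + t] x ∈ K := by
    intro t
    induction t with
    | zero => simpa using hj
    | succ t ih =>
      have : j + (t+1) = 1 + (j + t) := by omega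
      rw [this, Function.iterate_add_apply, Function.iterate_one]
      exact hK _ ih
  have hmul : ∀ n, g^[n * p] x = x := by
    intro n
    induction n with
    | zero => simp
    | succ n ih =>
      rw [show (n+1) * p = n * p + p by ring, Function.iterate_add_apply, hper, ih]
  have hxK : x ∈ K := by
    have h1 : g^[j + (j * p - j)] x ∈ K := fwd _
    have h2 : j + (j * p - j) = j * p := by
      have : j ≤ j * p := Nat.le_mul_of_pos_right j hp
      omega
    rw [h2, hmul j] at h1
    exact h1
  intro k
  have := fwd k
  -- refactor: direct induction from x ∈ K
  clear this
  induction k with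
  | zero => simpa using hxK
  | succ k ih =>
    rw [Function.iterate_succ_apply']
    exact hK _ ih

/-- if the whole orbit lies in an invariant subset of [a,m], then g²x = x -/
lemma even_of_orbit_in_anti {K : Set ℝ} (hKm : K ⊆ Icc a m) (hK : ∀ y ∈ K, g y ∈ K)
    {x : ℝ} {p : ℕ} (hp : 0 < p) (hper : g^[p] x = x)
    (hall : ∀ k, g^[k] x ∈ K) : g^[2] x = x := by
  have mono2 : ∀ y₁ ∈ K, ∀ y₂ ∈ K, y₁ < y₂ → g (g y₁) < g (g y₂) := by
    intro y₁ h₁ y₂ h₂ hlt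
    have h₁' := hK _ h₁
    have h₂' := hK _ h₂
    exact H.hdec (hKm h₂') (hKm h₁') (H.hdec (hKm h₁) (hKm h₂) hlt)
  have key : ∀ w : ℝ, (∀ k, g^[k] w ∈ K) → g^[p] w = w → g^[2] w < w → False := by
    intro w hw hperw hlt
    have step : ∀ k, g^[2*(k+1)] w < g^[2*k] w := by
      intro k
      induction k with
      | zero => simpa using hlt
      | succ k ih =>
        have := mono2 _ (hw (2*(k+1))) _ (hw (2*k)) ih
        have e1 : g (g (g^[2*(k+1)] w)) = g^[2*(k+2)] w := by
          rw [show 2*(k+2) = 2 + 2*(k+1) by ring, Function.iterate_add_apply]; rfl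
        have e2 : g (g (g^[2*k] w)) = g^[2*(k+1)] w := by
          rw [show 2*(k+1) = 2 + 2*k by ring, Function.iterate_add_apply]; rfl
        rw [e1, e2] at this
        exact this
    have sa : StrictAnti (fun k => g^[2*k] w) := strictAnti_nat_of_succ_lt (by
      intro n; have := step n; simpa [Nat.mul_succ, Nat.succ_eq_add_one] using this)
    have : g^[2*p] w < g^[2*0] w := sa (by omega : 0 < p)
    have h2p : g^[2*p] w = w := by
      rw [show 2*p = p + p by ring, Function.iterate_add_apply, hperw, hperw]
    rw [h2p] at this
    simp at this
  rcases lt_trichotomy (g^[2] x) x with hlt | he | hgt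
  · exact absurd hlt (fun hlt => key x hall hper hlt)
  · exact he
  · exfalso
    -- apply key to w := g^[2] x?  Instead symmetric argument:
    have step : ∀ k, g^[2*k] x < g^[2*(k+1)] x := by
      intro k
      induction k with
      | zero => simpa using hgt
      | succ k ih =>
        have := mono2 _ (hall (2*k)) _ (hall (2*(k+1))) ih
        have e1 : g (g (g^[2*(k+1)] x)) = g^[2*(k+2)] x := by
          rw [show 2*(k+2) = 2 + 2*(k+1) by ring, Function.iterate_add_apply]; rfl
        have e2 : g (g (g^[2*k] x)) = g^[2*(k+1)] x := by
          rw [show 2*(k+1) = 2 + 2*k by ring, Function.iterate_add_apply]; rfl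
        rw [e1, e2] at this
        exact this
    have sm : StrictMono (fun k => g^[2*k] x) := strictMono_nat_of_lt_succ (by
      intro n; have := step n; simpa [Nat.mul_succ, Nat.succ_eq_add_one] using this)
    have : g^[2*0] x < g^[2*p] x := sm (by omega : 0 < p)
    have h2p : g^[2*p] x = x := by
      rw [show 2*p = p + p by ring, Function.iterate_add_apply, hper, hper]
    rw [h2p] at this
    simp at this

lemma necessity1 {x : ℝ} (hx : x ∈ Icc a b) {p : ℕ} (hodd : Odd p) (hp1 : 1 < p)
    (hper : g^[p] x = x) (hmin : ∀ k, 0 < k → k < p → g^[k] x ≠ x) :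
    m < g^[2] m := by
  by_contra hctr
  push_neg at hctr
  have hp : 0 < p := by omega
  have hp3 : 3 ≤ p := by obtain ⟨t, ht⟩ := hodd; omega
  set c := g m with hc
  set d := g^[2] m with hdd
  have hdc : d = g c := rfl
  have hcab : c ∈ Icc a b := H.gmem H.mIcc
  have hdab : d ∈ Icc a b := H.gmem hcab
  have hcd : c ≤ d := by rw [hdc]; exact H.gmin hcab
  have hcm : c ∈ Icc a m := ⟨hcab.1, hcd.trans hctr⟩
  have hdm : d ∈ Icc a m := ⟨hdab.1, hctr⟩
  have hJm : Icc c d ⊆ Icc a m := fun y hy => ⟨hcm.1.trans hy.1, hy.2.trans hctr⟩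
  have hgd : g d ≤ d := by
    rw [hdc]; exact H.anti hcm hdm hcd
  have hinv : ∀ y ∈ Icc c d, g y ∈ Icc c d := by
    intro y hy
    have hym := hJm hy
    constructor
    · exact H.gmin (Icc_subset_Icc le_rfl H.mb' hym)
    · calc g y ≤ g c := H.anti hcm hym hy.1
        _ = d := rfl
  -- the orbit enters Icc c d
  obtain ⟨k, hk0, hkm⟩ := H.exists_iter_le_m hx hp hper
  have hkc : c ≤ g^[k] x := by
    rw [show k = (k-1)+1 by omega, Function.iterate_succ_apply']
    exact H.gmin (H.iter_mem hx _)
  have hJ : ∃ j, g^[j] x ∈ Icc c d := by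
    rcases le_total (g^[k] x) d with h | h
    · exact ⟨k, hkc, h⟩
    · refine ⟨k+1, ?_, ?_⟩
      · rw [Function.iterate_succ_apply']
        exact H.gmin (H.iter_mem hx _)
      · rw [Function.iterate_succ_apply']
        calc g (g^[k] x) ≤ g d := H.anti hdm ⟨hcm.1.trans hkc, hkm⟩ h
          _ ≤ d := hgd
  obtain ⟨j, hj⟩ := hJ
  have hall := orbit_in_invariant hinv hp hper hj
  have h2 := H.even_of_orbit_in_anti hJm hinv hp hper hall
  exact hmin 2 (by omega) (by omega) h2

lemma necessity2 {x : ℝ} (hx : x ∈ Icc a b) {p : ℕ} (hodd : Odd p) (hp1 : 1 < p)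
    (hper : g^[p] x = x) (hmin : ∀ k, 0 < k → k < p → g^[k] x ≠ x)
    (hd : m < g^[2] m) :
    sSup {x : ℝ | x ∈ Set.Icc a m ∧ g x ∈ Set.Icc a m ∧ g^[2] x = x} < g^[3] m := by
  by_contra hctr
  push_neg at hctr
  have hp : 0 < p := by omega
  have hp3 : 3 ≤ p := by obtain ⟨t, ht⟩ := hodd; omega
  set q := sSup {x : ℝ | x ∈ Set.Icc a m ∧ g x ∈ Set.Icc a m ∧ g^[2] x = x} with hqdef
  obtain ⟨hqm, hgqm, hq2⟩ := H.q_mem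
  set qb := g q with hqb
  have hq2' : g qb = q := hq2
  have hqbP : qb ∈ {x : ℝ | x ∈ Set.Icc a m ∧ g x ∈ Set.Icc a m ∧ g^[2] x = x} := by
    refine ⟨hgqm, by rw [hq2']; exact hqm, ?_⟩
    show g (g qb) = qb
    rw [hq2']
  have hqbq : qb ≤ q := le_csSup H.P_compact.bddAbove hqbP
  have hqltm : q < m := by
    rcases eq_or_lt_of_le hqm.2 with he | h
    · exfalso; have : g^[2] m = m := by rw [← he]; exact hq2
      linarith [hd, this]
    · exact h
  set c := g m with hc
  have hcab : c ∈ Icc a b := H.gmem H.mIcc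
  have hcqb : c < qb := H.hdec hqm ⟨H.am, le_rfl⟩ hqltm
  have hSm : Icc qb q ⊆ Icc a m := fun y hy => ⟨hgqm.1.trans hy.1, hy.2.trans hqm.2⟩
  have hSinv : ∀ y ∈ Icc qb q, g y ∈ Icc qb q := by
    intro y hy
    have hym := hSm hy
    constructor
    · calc qb = g q := rfl
        _ ≤ g y := H.anti hym hqm hy.2
    · calc g y ≤ g qb := H.anti hgqm hym hy.1
        _ = q := hq2'
  by_cases hScase : ∃ j, g^[j] x ∈ Icc qb q
  · obtain ⟨j, hj⟩ := hScase
    have hall := orbit_in_invariant hSinv hp hper hj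
    have h2 := H.even_of_orbit_in_anti hSm hSinv hp hper hall
    exact hmin 2 (by omega) (by omega) h2
  push_neg at hScase
  -- orbit lower bound c
  have horbab : ∀ k, g^[k] x ∈ Icc a b := H.iter_mem hx
  have horbc : ∀ k, c ≤ g^[k] x := by
    intro k
    cases k with
    | zero =>
      show c ≤ x
      rw [← hper, show p = (p-1)+1 by omega, Function.iterate_succ_apply']
      exact H.gmin (horbab _)
    | succ k =>
      rw [Function.iterate_succ_apply']
      exact H.gmin (horbab _)
  set d := g^[2] m with hdd
  have hdab : d ∈ Icc a b := H.gmem hcab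
  have hdmb : d ∈ Icc m b := ⟨hd.le, hdab.2⟩
  -- step 1: low → high (≤ d)
  have step1 : ∀ k, g^[k] x < qb → q < g^[k+1] x ∧ g^[k+1] x ≤ d := by
    intro k hk
    have hym : g^[k] x ∈ Icc a m := ⟨(horbab k).1, hk.le.trans (hSm (left_mem_Icc.mpr hqbq)).2⟩
    constructor
    · rw [Function.iterate_succ_apply']
      calc q = g qb := hq2'.symm
        _ < g (g^[k] x) := H.hdec hym hgqm hk
    · rw [Function.iterate_succ_apply']
      calc g (g^[k] x) ≤ g c := H.anti ⟨hcab.1, hcqb.le.trans (hSm (left_mem_Icc.mpr hqbq)).2⟩ hym (horbc k)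
        _ = d := rfl
  -- step 2: high (≤ d) → low
  have step2 : ∀ k, q < g^[k] x → g^[k] x ≤ d → g^[k+1] x < qb := by
    intro k hk1 hk2
    have hnotS := hScase (k+1)
    rcases le_total (g^[k] x) m with h | h
    · rw [Function.iterate_succ_apply']
      calc g (g^[k] x) < g q := H.hdec hqm ⟨(horbab k).1, h⟩ hk1
        _ = qb := rfl
    · have hle : g^[k+1] x ≤ q := by
        rw [Function.iterate_succ_apply']
        calc g (g^[k] x) ≤ g d := H.mono ⟨h, (horbab k).2⟩ hdmb hk2
          _ = g^[3] m := rfl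
          _ ≤ q := hctr
      by_contra hge
      push_neg at hge
      exact hnotS ⟨hge, hle⟩
  -- there is a low point
  have hlow : ∃ k, g^[k] x < qb := by
    obtain ⟨k₁, hk₁0, hk₁m⟩ := H.exists_iter_le_m hx hp hper
    rcases lt_or_ge (g^[k₁] x) qb with h | h
    · exact ⟨k₁, h⟩
    · have hq1 : q < g^[k₁] x := by
        by_contra hq1
        push_neg at hq1
        exact hScase k₁ ⟨h, hq1⟩
      refine ⟨k₁+1, ?_⟩
      rw [Function.iterate_succ_apply']
      calc g (g^[k₁] x) < g q := H.hdec hqm ⟨(horbab k₁).1, hk₁m⟩ hq1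
        _ = qb := rfl
  obtain ⟨k₀, hk₀⟩ := hlow
  have lows : ∀ j, g^[k₀ + 2*j] x < qb := by
    intro j
    induction j with
    | zero => simpa using hk₀
    | succ j ih =>
      have h1 := step1 _ ih
      have h2 := step2 _ h1.1 h1.2
      have : k₀ + 2*(j+1) = (k₀ + 2*j + 1) + 1 := by ring
      rw [this]
      exact h2
  obtain ⟨t, ht⟩ := hodd
  have hlowt := lows t
  have hhight := (step1 _ hlowt).1
  have heq : g^[k₀ + 2*t + 1] x = g^[k₀] x := by
    rw [show k₀ + 2*t + 1 = k₀ + p by omega, Function.iterate_add_apply, hper]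
  rw [heq] at hhight
  have : qb ≤ q := hqbq
  linarith [lows 0, hhight, (by simpa using lows 0 : g^[k₀] x < qb)]

lemma star (hd : m < g^[2] m) {x : ℝ}
    (hx : x ∈ Ioc (sSup {x : ℝ | x ∈ Set.Icc a m ∧ g x ∈ Set.Icc a m ∧ g^[2] x = x}) m) :
    x < g^[2] x := by
  set q := sSup {x : ℝ | x ∈ Set.Icc a m ∧ g x ∈ Set.Icc a m ∧ g^[2] x = x} with hqdef
  obtain ⟨hqm, hgqm, hq2⟩ := H.q_mem
  have hxm : x ∈ Icc a m := ⟨hqm.1.trans hx.1.le, hx.2⟩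
  by_contra hctr
  push_neg at hctr
  rcases eq_or_lt_of_le hctr with he | hlt
  · have hxP : x ∈ {x : ℝ | x ∈ Set.Icc a m ∧ g x ∈ Set.Icc a m ∧ g^[2] x = x} := by
      refine ⟨hxm, ⟨(H.gmem (Icc_subset_Icc le_rfl H.mb' hxm)).1, ?_⟩, he⟩
      calc g x ≤ g q := (H.hdec hqm hxm hx.1).le
        _ ≤ m := hgqm.2
    exact absurd (le_csSup H.P_compact.bddAbove hxP) (not_le.mpr hx.1)
  · -- IVT gives an element of P above q
    have hcc : ContinuousOn (fun t => g (g t) - t) (Icc x m) := by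
      apply ContinuousOn.sub _ continuousOn_id
      have hsub : Icc x m ⊆ Icc a b := Icc_subset_Icc hxm.1 H.mb'
      exact H.hcont.comp (H.hcont.mono hsub) (fun t ht => H.gmem (hsub ht))
    have h0 : (0:ℝ) ∈ Icc (g (g x) - x) (g (g m) - m) := by
      constructor
      · have : g (g x) = g^[2] x := rfl
        linarith [hlt]
      · have : g (g m) = g^[2] m := rfl
        linarith [hd]
    obtain ⟨y, hy, hy0⟩ := intermediate_value_Icc hx.2 hcc h0
    have hyfix : g (g y) = y := by dsimp at hy0; linarith [sub_eq_zero.mp hy0]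
    have hqy : q < y := hx.1.trans_le hy.1
    have hym : y ∈ Icc a m := ⟨hxm.1.trans hy.1, hy.2⟩
    have hyP : y ∈ {x : ℝ | x ∈ Set.Icc a m ∧ g x ∈ Set.Icc a m ∧ g^[2] x = x} := by
      refine ⟨hym, ⟨(H.gmem (Icc_subset_Icc le_rfl H.mb' hym)).1, ?_⟩, hyfix⟩
      calc g y ≤ g q := (H.hdec hqm hym hqy).le
        _ ≤ m := hgqm.2
    exact absurd (le_csSup H.P_compact.bddAbove hyP) (not_le.mpr hqy)

lemma sufficiency (hd : m < g^[2] m)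
    (he : sSup {x : ℝ | x ∈ Set.Icc a m ∧ g x ∈ Set.Icc a m ∧ g^[2] x = x} < g^[3] m) :
    ∃ x ∈ Set.Icc a b, ∃ p : ℕ, Odd p ∧ 1 < p ∧ g^[p] x = x ∧
      ∀ k : ℕ, 0 < k → k < p → g^[k] x ≠ x := by
  classical
  set q := sSup {x : ℝ | x ∈ Set.Icc a m ∧ g x ∈ Set.Icc a m ∧ g^[2] x = x} with hqdef
  obtain ⟨hqm, hgqm, hq2⟩ := H.q_mem
  set qb := g q with hqb
  have hq2' : g qb = q := hq2
  have hqbP : qb ∈ {x : ℝ | x ∈ Set.Icc a m ∧ g x ∈ Set.Icc a m ∧ g^[2] x = x} := by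
    refine ⟨hgqm, by rw [hq2']; exact hqm, ?_⟩
    show g (g qb) = qb
    rw [hq2']
  have hqbq : qb ≤ q := le_csSup H.P_compact.bddAbove hqbP
  have hqltm : q < m := by
    rcases eq_or_lt_of_le hqm.2 with heq | h
    · exfalso
      have : g^[2] m = m := by rw [← heq]; exact hq2
      linarith [hd]
    · exact h
  set c := g m with hc
  set d := g^[2] m with hdd
  set e := g^[3] m with hee
  have hdc : d = g c := rfl
  have hed : e = g d := rfl
  have hcab : c ∈ Icc a b := H.gmem H.mIcc
  have hdab : d ∈ Icc a b := H.gmem hcab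
  have heab : e ∈ Icc a b := H.gmem hdab
  have hcqb : c < qb := H.hdec hqm ⟨H.am, le_rfl⟩ hqltm
  have hqbm : qb ≤ m := hgqm.2
  have hcm : c ∈ Icc a m := ⟨hcab.1, hcqb.le.trans hqbm⟩
  have hqab : q ∈ Icc a b := ⟨hqm.1, hqm.2.trans H.mb'⟩
  have hed' : e < d := by
    rcases eq_or_lt_of_le hdab.2 with heq | h
    · rw [hed, heq]; rw [heq] at hd; exact heq ▸ H.hgb
    · exact hed ▸ H.hbelow d ⟨hd.le, h⟩
  -- the escape sequence
  set E : ℕ → ℝ := fun k => g^[2*k] e with hE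
  have hE0 : E 0 = e := by simp [hE]
  have hEstep : ∀ k, E (k+1) = g (g (E k)) := by
    intro k
    show g^[2*(k+1)] e = g (g (g^[2*k] e))
    rw [show 2*(k+1) = 2 + 2*k by ring, Function.iterate_add_apply]
    rfl
  have hEstep2 : ∀ k, E (k+1) = g^[2] (E k) := hEstep
  have hEab : ∀ k, E k ∈ Icc a b := fun k => H.iter_mem heab _
  -- there is an escape time
  have hN : ∃ k, m < E k := by
    by_contra hub
    push_neg at hub
    have hElow : ∀ k, q < E k := by
      intro k
      induction k with
      | zero => rw [hE0]; exact he
      | succ k ih =>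
        have := H.star hd ⟨ih, hub k⟩
        calc q < E k := ih
          _ < g^[2] (E k) := this
          _ = E (k+1) := (hEstep2 k).symm
    have hmono : Monotone E := monotone_nat_of_le_succ (by
      intro k
      have := H.star hd ⟨hElow k, hub k⟩
      rw [hEstep2 k]
      exact this.le)
    have hbd : BddAbove (Set.range E) := ⟨m, by rintro _ ⟨k, rfl⟩; exact hub k⟩
    have htend : Filter.Tendsto E Filter.atTop (nhds (⨆ k, E k)) :=
      tendsto_atTop_ciSup hmono hbd
    set L := ⨆ k, E k with hL
    have hLm : L ≤ m := ciSup_le hub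
    have hqL : q < L := (hElow 0).trans_le (le_ciSup hbd 0)
    have hLab : L ∈ Icc a b := ⟨(hEab 0).1.trans (le_ciSup hbd 0), hLm.trans H.mb'⟩
    have hG : ContinuousOn (fun y => g (g y)) (Icc a b) :=
      H.hcont.comp H.hcont (fun t ht => H.gmem ht)
    have hT1 : Filter.Tendsto E Filter.atTop (nhdsWithin L (Icc a b)) :=
      tendsto_nhdsWithin_iff.mpr ⟨htend, Filter.Eventually.of_forall hEab⟩
    have hT2 : Filter.Tendsto (fun k => E (k + 1)) Filter.atTop (nhds (g (g L))) := by
      have := ((hG L hLab).tendsto).comp hT1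
      have heq : (fun k => g (g (E k))) = fun k => E (k+1) := by
        funext k
        exact (hEstep k).symm
      exact heq ▸ this
    have hT3 : Filter.Tendsto (fun k => E (k + 1)) Filter.atTop (nhds L) :=
      htend.comp (Filter.tendsto_add_atTop_nat 1)
    have hGLL : g (g L) = L := tendsto_nhds_unique hT2 hT3
    have : L < g (g L) := H.star hd ⟨hqL, hLm⟩
    rw [hGLL] at this
    exact lt_irrefl _ this
  obtain ⟨N, hEN, hNmin⟩ : ∃ N, m < E N ∧ ∀ k, k < N → E k ≤ m :=
    ⟨Nat.find hN, Nat.find_spec hN, fun k hk => not_lt.mp (Nat.find_min hN hk)⟩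
  have hEpos : ∀ k, k ≤ N → q < E k := by
    intro k hk
    induction k with
    | zero => rw [hE0]; exact he
    | succ k ih =>
      have hkN : k < N := by omega
      have hq : q < E k := ih (by omega)
      have := H.star hd ⟨hq, hNmin k hkN⟩
      calc q < E k := hq
        _ < g^[2] (E k) := this
        _ = E (k+1) := (hEstep2 k).symm
  have hEm : ∀ k, k < N → E k ∈ Icc a m := fun k hk => ⟨(hEab k).1, hNmin k hk⟩
  have hENd : E N ≤ d := by
    cases hN0 : N with
    | zero =>
      rw [hE0]
      exact hed'.le
    | succ n =>
      have hnN : n < N := by omega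
      have hqn : q < E n := hEpos n (by omega)
      have hgEn1 : g (E n) ≤ qb := (H.hdec hqm (hEm n hnN) hqn).le
      have hgEn0 : c ≤ g (E n) := H.gmin (hEab n)
      have h2 : g (g (E n)) ≤ g c :=
        H.anti hcm ⟨hcm.1.trans hgEn0, hgEn1.trans hqbm⟩ hgEn0
      rw [hEstep n]
      exact h2.trans_eq hdc.symm
  -- expansion: intervals mapping exactly onto [q, E k]
  have expansion : ∀ k, k ≤ N → ∃ u v, q ≤ u ∧ u ≤ v ∧ v ≤ e ∧
      g^[2*k] '' Icc u v = Icc q (E k) := by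
    intro k hk
    induction k with
    | zero =>
      refine ⟨q, e, le_rfl, (hE0 ▸ hEpos 0 (by omega)).le, le_rfl, ?_⟩
      simp [hE0]
    | succ k ih =>
      obtain ⟨u, v, hqu, huv, hve, himg⟩ := ih (by omega)
      have hkN : k < N := by omega
      have hEkm := hEm k hkN
      have hqEk : q < E k := hEpos k (by omega)
      have hgEk1 : g (E k) ≤ qb := (H.hdec hqm hEkm hqEk).le
      have hgEk0 : a ≤ g (E k) := (H.gmem (hEab k)).1
      -- step B : g '' [g (E k), qb] ⊇ [q, E (k+1)]
      have hcontB : ContinuousOn g (Icc (g (E k)) qb) :=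
        H.hcont.mono (Icc_subset_Icc hgEk0 (hqbm.trans H.mb'))
      have hsubB : Icc q (E (k+1)) ⊆ g '' Icc (g (E k)) qb := by
        have := intermediate_value_Icc' hgEk1 hcontB
        rw [hq2', ← hEstep k] at this
        exact this
      obtain ⟨u₂, v₂, hB1, hB2, hB3, hBimg⟩ :=
        exists_exact_subinterval hgEk1 hcontB (hEpos (k+1) hk).le hsubB
      -- step A : g '' [q, E k] ⊇ [g (E k), qb]
      have hcontA : ContinuousOn g (Icc q (E k)) :=
        H.hcont.mono (Icc_subset_Icc hqm.1 (hEkm.2.trans H.mb'))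
      have hsubA : Icc u₂ v₂ ⊆ g '' Icc q (E k) := by
        have := intermediate_value_Icc' hqEk.le hcontA
        rw [← hqb] at this
        exact (Icc_subset_Icc hB1 hB3).trans this
      obtain ⟨u₁, v₁, hA1, hA2, hA3, hAimg⟩ :=
        exists_exact_subinterval hqEk.le hcontA hB2 hsubA
      -- step K : pull back through g^[2k]
      have hcontK : ContinuousOn (g^[2*k]) (Icc u v) :=
        (H.iter_cont (2*k)).mono (Icc_subset_Icc (hqm.1.trans hqu) (hve.trans heab.2))
      have hsubK : Icc u₁ v₁ ⊆ g^[2*k] '' Icc u v := by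
        rw [himg]
        exact Icc_subset_Icc hA1 hA3
      obtain ⟨u₀, v₀, h01, h02, h03, h0img⟩ :=
        exists_exact_subinterval huv hcontK hA2 hsubK
      refine ⟨u₀, v₀, hqu.trans h01, h02, h03.trans hve, ?_⟩
      have hdecomp : g^[2*(k+1)] = g ∘ (g ∘ g^[2*k]) := by
        rw [show 2*(k+1) = 1 + (1 + 2*k) by ring, Function.iterate_add,
          Function.iterate_add, Function.iterate_one]
      rw [hdecomp]
      simp only [Set.image_comp]
      rw [h0img, hAimg, hBimg]
  -- final assembly
  obtain ⟨u, v, hqu, huv, hve, himgN⟩ := expansion N le_rfl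
  have hq_e : q < e := he
  -- K₃ ⊆ [c, qb] with g '' K₃ = [m, d]
  have hcont3 : ContinuousOn g (Icc c qb) :=
    H.hcont.mono (Icc_subset_Icc hcab.1 (hqbm.trans H.mb'))
  have hsub3 : Icc m d ⊆ g '' Icc c qb := by
    have h1 := intermediate_value_Icc' hcqb.le hcont3
    rw [hq2', ← hdc] at h1
    exact (Icc_subset_Icc hqm.2 le_rfl).trans h1
  obtain ⟨u₃, v₃, h31, h32, h33, h3img⟩ :=
    exists_exact_subinterval hcqb.le hcont3 hd.le hsub3
  -- K₂ ⊆ [q, m] with g '' K₂ = K₃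
  have hcont2 : ContinuousOn g (Icc q m) :=
    H.hcont.mono (Icc_subset_Icc hqm.1 H.mb')
  have hsub2 : Icc u₃ v₃ ⊆ g '' Icc q m := by
    have h1 := intermediate_value_Icc' hqltm.le hcont2
    rw [← hqb, ← hc] at h1
    exact (Icc_subset_Icc h31 h33).trans h1
  obtain ⟨u₂, v₂, h21, h22, h23, h2img⟩ :=
    exists_exact_subinterval hqltm.le hcont2 h32 hsub2
  -- K₁ ⊆ [u, v] with g^[2N] '' K₁ = K₂
  have hcont1 : ContinuousOn (g^[2*N]) (Icc u v) :=
    (H.iter_cont (2*N)).mono (Icc_subset_Icc (hqm.1.trans hqu) (hve.trans heab.2))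
  have hsub1 : Icc u₂ v₂ ⊆ g^[2*N] '' Icc u v := by
    rw [himgN]
    exact Icc_subset_Icc h21 (h23.trans hEN.le)
  obtain ⟨u₁, v₁, h11, h12, h13, h1img⟩ :=
    exists_exact_subinterval huv hcont1 h22 hsub1
  -- K₀ ⊆ [m, d] with g '' K₀ = K₁
  have hcont0 : ContinuousOn g (Icc m d) :=
    H.hcont.mono (Icc_subset_Icc H.am hdab.2)
  have hsub0 : Icc u₁ v₁ ⊆ g '' Icc m d := by
    have h1 := intermediate_value_Icc hd.le hcont0
    rw [← hc, ← hed] at h1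
    refine Subset.trans ?_ h1
    intro t ht
    exact ⟨(hcqb.le.trans (hqbq.trans (hqu.trans (h11.trans ht.1)))),
      ht.2.trans (h13.trans (hve))⟩
  obtain ⟨u₀, v₀, h001, h002, h003, h0img⟩ :=
    exists_exact_subinterval hd.le hcont0 h12 hsub0
  -- the big image identity
  have hdecomp : g^[2*N+3] = g ∘ (g ∘ (g^[2*N] ∘ g)) := by
    rw [show 2*N+3 = 1 + (1 + (2*N + 1)) by ring, Function.iterate_add,
      Function.iterate_add, Function.iterate_one, Function.iterate_succ]
  have hbigimg : g^[2*N+3] '' Icc u₀ v₀ = Icc m d := by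
    rw [hdecomp]
    simp only [Set.image_comp]
    rw [h0img, h1img, h2img, h3img]
  -- fixed point of g^[2N+3] in K₀
  have hK0sub : Icc u₀ v₀ ⊆ Icc m d := Icc_subset_Icc h001 h003
  have hK0ab : Icc u₀ v₀ ⊆ Icc a b :=
    hK0sub.trans (Icc_subset_Icc H.am hdab.2)
  have hcontbig : ContinuousOn (g^[2*N+3]) (Icc u₀ v₀) :=
    (H.iter_cont (2*N+3)).mono hK0ab
  obtain ⟨s, hs, hfs⟩ : ∃ s ∈ Icc u₀ v₀, g^[2*N+3] s = m := by
    have : m ∈ Icc m d := left_mem_Icc.mpr hd.le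
    rw [← hbigimg] at this
    obtain ⟨s, hs, hfs⟩ := this
    exact ⟨s, hs, hfs⟩
  obtain ⟨t, ht, hft⟩ : ∃ t ∈ Icc u₀ v₀, g^[2*N+3] t = d := by
    have : d ∈ Icc m d := right_mem_Icc.mpr hd.le
    rw [← hbigimg] at this
    obtain ⟨t, ht, hft⟩ := this
    exact ⟨t, ht, hft⟩
  have hconth : ContinuousOn (fun y => g^[2*N+3] y - y) (uIcc s t) :=
    (hcontbig.mono (uIcc_subset_Icc hs ht)).sub continuousOn_id
  have h0mem : (0:ℝ) ∈ uIcc (g^[2*N+3] s - s) (g^[2*N+3] t - t) := by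
    apply Set.mem_uIcc.mpr
    left
    constructor
    · rw [hfs]; linarith [(hK0sub hs).1]
    · rw [hft]; linarith [(hK0sub ht).2]
  obtain ⟨y, hy, hy0⟩ := intermediate_value_uIcc hconth h0mem
  have hyfix : g^[2*N+3] y = y := by
    have := sub_eq_zero.mp hy0
    exact this
  have hyK0 : y ∈ Icc u₀ v₀ := uIcc_subset_Icc hs ht hy
  have hymd : y ∈ Icc m d := hK0sub hyK0
  have hyab : y ∈ Icc a b := hK0ab hyK0
  -- extract the minimal period
  have hex : ∃ k, 0 < k ∧ g^[k] y = y := ⟨2*N+3, by omega, hyfix⟩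
  obtain ⟨pm, hpm0, hpmper, hpmmin⟩ :
      ∃ pm, 0 < pm ∧ g^[pm] y = y ∧ ∀ k, k < pm → ¬(0 < k ∧ g^[k] y = y) :=
    ⟨Nat.find hex, (Nat.find_spec hex).1, (Nat.find_spec hex).2,
      fun k hk => Nat.find_min hex hk⟩
  have hmul : ∀ t, g^[pm * t] y = y := by
    intro t
    induction t with
    | zero => simp
    | succ t ih =>
      rw [show pm * (t+1) = pm + pm * t by ring, Function.iterate_add_apply, ih, hpmper]
  have hdvd : pm ∣ 2*N+3 := by
    set r := (2*N+3) % pm with hr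
    have hzero : g^[r] y = y := by
      have h1 : 2*N+3 = r + pm * ((2*N+3) / pm) := by
        rw [hr, Nat.mod_add_div (2*N+3) pm]
      have h2 : g^[r + pm * ((2*N+3)/pm)] y = y := by rw [← h1]; exact hyfix
      rw [Function.iterate_add_apply, hmul] at h2
      exact h2
    rcases Nat.eq_zero_or_pos r with h | h
    · exact Nat.dvd_of_mod_eq_zero h
    · exfalso
      exact hpmmin r (Nat.mod_lt _ hpm0) ⟨h, hzero⟩
  have hoddp : Odd pm := by
    rcases Nat.even_or_odd pm with hev | hod
    · exfalso
      have h2 : (2:ℕ) ∣ 2*N+3 := dvd_trans hev.two_dvd hdvd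
      omega
    · exact hod
  have h1pm : 1 < pm := by
    by_contra hle
    push_neg at hle
    have hpm1 : pm = 1 := by omega
    have hgy : g y = y := by
      have h2 := hpmper
      rw [hpm1] at h2
      simpa using h2
    have := H.fix_lt_m hyab hgy
    linarith [hymd.1]
  exact ⟨y, hyab, pm, hoddp, h1pm, hpmper,
    fun k hk hklt heq => hpmmin k hklt ⟨hk, heq⟩⟩

end VS

end Stmt0Aux

/-- For `g` in the class 𝔊 on `[a,b]` with turning point `m`,
`g` has a periodic point of odd period greater than 1 iff `g²(m) > m` and
`g³(m) > max Π`, where `Π = {x ∈ [a,m] : g(x) ∈ [a,m] ∧ g²(x) = x}`. -/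
theorem stmt_0 (a b m : ℝ) (g : ℝ → ℝ) (hab : a < b)
    (hcont : ContinuousOn g (Set.Icc a b))
    (hmaps : Set.MapsTo g (Set.Icc a b) (Set.Icc a b))
    (hm : m ∈ Set.Ioo a b)
    (hdec : StrictAntiOn g (Set.Icc a m))
    (hinc : StrictMonoOn g (Set.Icc m b))
    (hga : g a > a) (hgb : g b < b)
    (hbelow : ∀ x ∈ Set.Ico m b, g x < x) :
    (∃ x ∈ Set.Icc a b, ∃ p : ℕ, Odd p ∧ 1 < p ∧ g^[p] x = x ∧
        ∀ k : ℕ, 0 < k → k < p → g^[k] x ≠ x) ↔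
      (g^[2] m > m ∧
        g^[3] m > sSup {x : ℝ | x ∈ Set.Icc a m ∧ g x ∈ Set.Icc a m ∧ g^[2] x = x}) := by
  have H : Stmt0Aux.VS a b m g :=
    ⟨hab, hcont, hmaps, hm.1, hm.2, hdec, hinc, hga, hgb, hbelow⟩
  constructor
  · rintro ⟨x, hx, p, hodd, hp1, hper, hmin⟩
    have h1 := H.necessity1 hx hodd hp1 hper hmin
    exact ⟨h1, H.necessity2 hx hodd hp1 hper hmin h1⟩
  · rintro ⟨h1, h2⟩
    exact H.sufficiency h1 h2
end

section
/- Let a < b be real numbers and let g : [a,b] → [a,b] be continuous and belong to the class 𝔊 with turning point m. Then the second iterate g² is turbulent if and only if g²(m) > m and g³(m) ≥ min Π, where Π = {x ∈ [a,m] : g(x) ∈ [a,m] and g²(x) = x}. -/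
/-- For `g` in the class 𝔊 on `[a,b]` with turning point `m`,
the second iterate `g²` is turbulent iff `g²(m) > m` and `g³(m) ≥ min Π`,
where `Π = {x ∈ [a,m] : g(x) ∈ [a,m] ∧ g²(x) = x}`. Turbulence of `h` on the
interval means: there are `x₁, x₂, x₃` in the interval with `h(x₂) = h(x₁) = x₁`,
`h(x₃) = x₂`, and either `x₁ < x₃ < x₂` or `x₂ < x₃ < x₁`. -/
theorem stmt_1 (a b m : ℝ) (g : ℝ → ℝ) (hab : a < b)
    (hcont : ContinuousOn g (Set.Icc a b))
    (hmaps : Set.MapsTo g (Set.Icc a b) (Set.Icc a b))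
    (hm : m ∈ Set.Ioo a b)
    (hdec : StrictAntiOn g (Set.Icc a m))
    (hinc : StrictMonoOn g (Set.Icc m b))
    (hga : g a > a) (hgb : g b < b)
    (hbelow : ∀ x ∈ Set.Ico m b, g x < x) :
    (∃ x₁ ∈ Set.Icc a b, ∃ x₂ ∈ Set.Icc a b, ∃ x₃ ∈ Set.Icc a b,
        g^[2] x₂ = x₁ ∧ g^[2] x₁ = x₁ ∧ g^[2] x₃ = x₂ ∧
        ((x₁ < x₃ ∧ x₃ < x₂) ∨ (x₂ < x₃ ∧ x₃ < x₁))) ↔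
      (g^[2] m > m ∧
        g^[3] m ≥ sInf {x : ℝ | x ∈ Set.Icc a m ∧ g x ∈ Set.Icc a m ∧ g^[2] x = x}) := by
  have ham : a ≤ m := hm.1.le
  have hmb : m ≤ b := hm.2.le
  -- g maps [a,b] into itself
  have hmem : ∀ {x : ℝ}, a ≤ x → x ≤ b → a ≤ g x ∧ g x ≤ b := by
    intro x h1 h2
    have := hmaps ⟨h1, h2⟩
    exact ⟨this.1, this.2⟩
  -- monotonicity helpers
  have declt : ∀ {x y : ℝ}, a ≤ x → x < y → y ≤ m → g y < g x := by
    intro x y h1 h2 h3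
    exact hdec ⟨h1, h2.le.trans h3⟩ ⟨h1.trans h2.le, h3⟩ h2
  have decle : ∀ {x y : ℝ}, a ≤ x → x ≤ y → y ≤ m → g y ≤ g x := by
    intro x y h1 h2 h3
    rcases eq_or_lt_of_le h2 with rfl | h2
    · exact le_rfl
    · exact (declt h1 h2 h3).le
  have decrev_lt : ∀ {x y : ℝ}, a ≤ x → x ≤ m → a ≤ y → y ≤ m → g x < g y → y < x := by
    intro x y h1 h2 h3 h4 h5
    by_contra h
    push_neg at h
    exact absurd (decle h1 h h4) (not_le.mpr h5)
  have decrev_le : ∀ {x y : ℝ}, a ≤ x → x ≤ m → a ≤ y → y ≤ m → g x ≤ g y → y ≤ x := by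
    intro x y h1 h2 h3 h4 h5
    by_contra h
    push_neg at h
    exact absurd (declt h1 h h4) (not_lt.mpr h5)
  have inclt : ∀ {x y : ℝ}, m ≤ x → x < y → y ≤ b → g x < g y := by
    intro x y h1 h2 h3
    exact hinc ⟨h1, h2.le.trans h3⟩ ⟨h1.trans h2.le, h3⟩ h2
  have incle : ∀ {x y : ℝ}, m ≤ x → x ≤ y → y ≤ b → g x ≤ g y := by
    intro x y h1 h2 h3
    rcases eq_or_lt_of_le h2 with rfl | h2
    · exact le_rfl
    · exact (inclt h1 h2 h3).le
  have increv_lt : ∀ {x y : ℝ}, m ≤ x → x ≤ b → m ≤ y → y ≤ b → g x < g y → x < y := by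
    intro x y h1 h2 h3 h4 h5
    by_contra h
    push_neg at h
    exact absurd (incle h3 h h2) (not_le.mpr h5)
  -- L0 : g y < y on [m,b]
  have hL0 : ∀ {y : ℝ}, m ≤ y → y ≤ b → g y < y := by
    intro y h1 h2
    rcases eq_or_lt_of_le h2 with rfl | h2
    · exact hgb
    · exact hbelow y ⟨h1, h2⟩
  have hgm_lt : g m < m := hL0 le_rfl hmb
  have hgm_mem := hmem ham hmb   -- a ≤ g m ∧ g m ≤ b
  have hgm_le_m : g m ≤ m := hgm_lt.le
  have hgm_a : a ≤ g m := hgm_mem.1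
  -- the set P and its minimum q
  set P : Set ℝ := {x : ℝ | x ∈ Set.Icc a m ∧ g x ∈ Set.Icc a m ∧ g^[2] x = x} with hPdef
  -- fixed point p of g in [a,m]
  have hsubm : Set.Icc a m ⊆ Set.Icc a b := Set.Icc_subset_Icc le_rfl hmb
  have hcontm : ContinuousOn g (Set.Icc a m) := hcont.mono hsubm
  obtain ⟨p, hp_mem, hp⟩ : ∃ p ∈ Set.Icc a m, g p - p = 0 := by
    have hc : ContinuousOn (fun x => g x - x) (Set.Icc a m) := hcontm.sub continuousOn_id
    have h0 : (0 : ℝ) ∈ Set.Icc (g m - m) (g a - a) :=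
      ⟨by linarith, by linarith⟩
    obtain ⟨p, hp1, hp2⟩ := intermediate_value_Icc' ham hc h0
    exact ⟨p, hp1, hp2⟩
  have hgp : g p = p := by linarith [hp]
  have hpP : p ∈ P := by
    refine ⟨hp_mem, ?_, ?_⟩
    · rw [hgp]; exact hp_mem
    · show g (g p) = p
      rw [hgp, hgp]
  have hPne : P.Nonempty := ⟨p, hpP⟩
  have hPbdd : BddBelow P := ⟨a, fun x hx => hx.1.1⟩
  have hPclosed : IsClosed P := by
    have h1 : P = Set.Icc a m ∩ (g ⁻¹' Set.Icc a m) ∩ {x | g (g x) - x = 0} := by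
      ext x
      simp only [hPdef, Set.mem_setOf_eq, Set.mem_inter_iff, Set.mem_preimage]
      constructor
      · rintro ⟨h1, h2, h3⟩
        refine ⟨⟨h1, h2⟩, ?_⟩
        have h4 : g (g x) = x := h3
        simp [h4]
      · rintro ⟨⟨h1, h2⟩, h3⟩
        refine ⟨h1, h2, ?_⟩
        show g (g x) = x
        linarith
    rw [h1]
    have hC : IsClosed (Set.Icc a m ∩ (g ⁻¹' Set.Icc a m)) :=
      hcontm.preimage_isClosed_of_isClosed isClosed_Icc isClosed_Icc
    have hsub2 : (Set.Icc a m ∩ (g ⁻¹' Set.Icc a m)) ⊆ Set.Icc a b := fun x hx => hsubm hx.1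
    have hcgg : ContinuousOn (fun x => g (g x) - x) (Set.Icc a m ∩ (g ⁻¹' Set.Icc a m)) := by
      have : ContinuousOn (fun x => g (g x)) (Set.Icc a m ∩ (g ⁻¹' Set.Icc a m)) := by
        apply ContinuousOn.comp hcont (hcont.mono hsub2)
        intro x hx
        exact hsubm hx.2
      exact this.sub continuousOn_id
    have h2' : Set.Icc a m ∩ (g ⁻¹' Set.Icc a m) ∩ {x | g (g x) - x = 0}
        = Set.Icc a m ∩ (g ⁻¹' Set.Icc a m) ∩ ((fun x => g (g x) - x) ⁻¹' {0}) := by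
      ext x; simp [Set.mem_preimage]
    rw [h2']
    exact hcgg.preimage_isClosed_of_isClosed hC isClosed_singleton
  set q : ℝ := sInf P with hqdef
  have hqP : q ∈ P := hPclosed.csInf_mem hPne hPbdd
  have hqmin : ∀ x ∈ P, q ≤ x := fun x hx => csInf_le hPbdd hx
  -- facts about q
  have hq1 : a ≤ q := hqP.1.1
  have hq2 : q ≤ m := hqP.1.2
  have hgq1 : a ≤ g q := hqP.2.1.1
  have hgq2 : g q ≤ m := hqP.2.1.2
  have hggq : g (g q) = q := hqP.2.2
  have hQP : g q ∈ P := by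
    refine ⟨⟨hgq1, hgq2⟩, ?_, ?_⟩
    · rw [hggq]; exact ⟨hq1, hq2⟩
    · show g (g (g q)) = g q
      rw [hggq]
  have hqQ : q ≤ g q := hqmin _ hQP
  -- global minimum of g∘g
  have hminL : ∀ {x : ℝ}, a ≤ x → x ≤ b → g m ≤ g (g x) := by
    intro x h1 h2
    have hgx := hmem h1 h2
    rcases le_or_gt (g x) m with h | h
    · exact decle hgx.1 h le_rfl
    · exact incle le_rfl h.le hgx.2
  -- setup bundle valid whenever m < g (g m)
  have hsetup : m < g (g m) → g m < q ∧ g q < m ∧ ∃ c, g c = m ∧ g m < c ∧ c < q := by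
    intro hm2
    have hgmq : g m < q := by
      by_contra hcon
      push_neg at hcon
      have := decle hq1 hcon hgm_le_m
      linarith
    have hQl : g q < m := by
      rcases eq_or_lt_of_le hgq2 with he | h
      · exfalso
        have : q = g m := by rw [← hggq, he]
        linarith
      · exact h
    have hcsub : Set.Icc (g m) m ⊆ Set.Icc a b := Set.Icc_subset_Icc hgm_a hmb
    obtain ⟨c, hc_mem, hc⟩ : ∃ c ∈ Set.Icc (g m) m, g c = m := by
      have h0 : m ∈ Set.Icc (g m) (g (g m)) := ⟨hgm_le_m, hm2.le⟩
      obtain ⟨c, h1, h2⟩ := intermediate_value_Icc' hgm_le_m (hcont.mono hcsub) h0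
      exact ⟨c, h1, h2⟩
    refine ⟨hgmq, hQl, c, hc, ?_, ?_⟩
    · rcases eq_or_lt_of_le hc_mem.1 with he | h
      · exfalso; rw [← he] at hc; linarith
      · exact h
    · have hgqgc : g q < g c := by rw [hc]; exact hQl
      exact decrev_lt hq1 hq2 (hgm_a.trans hc_mem.1) hc_mem.2 hgqgc
  constructor
  · rintro ⟨x₁, hx₁, x₂, hx₂, x₃, hx₃, e21, e11, e32, hord⟩
    have e21' : g (g x₂) = x₁ := e21
    have e11' : g (g x₁) = x₁ := e11
    have e32' : g (g x₃) = x₂ := e32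
    have hx12ne : x₁ ≠ x₂ := by
      rcases hord with ⟨h1, h2⟩ | ⟨h1, h2⟩
      · exact ne_of_lt (h1.trans h2)
      · exact (ne_of_lt (h1.trans h2)).symm
    -- Part 1 : m < g (g m)
    have hm2 : m < g (g m) := by
      by_contra hcon0
      push_neg at hcon0
      -- I = [g m, m] is invariant
      have hinv : ∀ {x : ℝ}, g m ≤ x → x ≤ m → g m ≤ g x ∧ g x ≤ m := by
        intro x h1 h2
        constructor
        · exact decle (hgm_a.trans h1) h2 le_rfl
        · have := decle hgm_a h1 h2
          linarith
      have hmono : ∀ {x y : ℝ}, g m ≤ x → x < y → y ≤ m → g (g x) < g (g y) := by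
        intro x y h1 h2 h3
        have hx := hinv h1 (h2.le.trans h3)
        have hy := hinv (h1.trans h2.le) h3
        have hgy : g y < g x := declt (hgm_a.trans h1) h2 h3
        exact declt (hgm_a.trans hy.1) hgy hx.2
      have hfixI : ∀ {x : ℝ}, a ≤ x → x ≤ b → g (g x) = x → g m ≤ x ∧ x ≤ m := by
        intro x hxa hxb hfix
        have hgx := hmem hxa hxb
        have hxm : x ≤ m := by
          by_contra hxm
          push_neg at hxm
          rcases le_or_gt (g x) m with h | h
          · have h1 : g m ≤ g x := incle le_rfl hxm.le hxb
            have := hinv h1 h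
            rw [hfix] at this
            linarith [this.2]
          · have h1 : g x < x := hL0 hxm.le hxb
            have h2 : g (g x) < g x := hL0 h.le (h1.le.trans hxb)
            rw [hfix] at h2
            linarith
        refine ⟨?_, hxm⟩
        by_contra hxg
        push_neg at hxg
        have h1 : g (g m) < g x := declt hxa hxg hgm_le_m
        have hgm2 : g m ≤ g (g m) := decle hgm_a hgm_le_m le_rfl
        rcases le_or_gt (g x) m with h | h
        · have := hinv (by linarith : g m ≤ g x) h
          rw [hfix] at this
          linarith [this.1]
        · have h2 : g m ≤ g (g x) := incle le_rfl h.le hgx.2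
          rw [hfix] at h2
          linarith
      have hx1I := hfixI hx₁.1 hx₁.2 e11'
      have hx2out : x₂ < g m ∨ m < x₂ := by
        by_contra hcon2
        push_neg at hcon2
        rcases lt_trichotomy x₂ x₁ with h | h | h
        · have := hmono hcon2.1 h hx1I.2
          rw [e21', e11'] at this
          exact lt_irrefl _ this
        · exact hx12ne h.symm
        · have := hmono hx1I.1 h hcon2.2
          rw [e21', e11'] at this
          exact lt_irrefl _ this
      rcases hx2out with hx2l | hx2r
      · have := hminL hx₃.1 hx₃.2
        rw [e32'] at this
        linarith
      · rcases hord with ⟨h1, h2⟩ | ⟨h1, h2⟩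
        · have hx3m : m < x₃ := by
            rcases le_or_gt x₃ m with h | h
            · exfalso
              rcases le_or_gt (g m) x₃ with h' | h'
              · -- x₃ ∈ I, then x₂ = g(g x₃) ∈ I, contradicting m < x₂
                have h5 := hinv h' h
                have h6 := hinv h5.1 h5.2
                rw [e32'] at h6
                linarith [h6.2]
              · linarith [hx1I.1]
            · exact h
          rcases le_or_gt (g x₃) m with h | h
          · have hgm_le : g m ≤ g x₃ := incle le_rfl hx3m.le hx₃.2
            have := hinv hgm_le h
            rw [e32'] at this
            linarith [this.2]
          · have h3 : g x₃ < x₃ := hL0 hx3m.le hx₃.2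
            have h4 : g (g x₃) < g x₃ := hL0 h.le (h3.le.trans hx₃.2)
            rw [e32'] at h4
            linarith
        · -- x₂ < x₃ < x₁ but x₁ ≤ m < x₂ : absurd
          linarith [hx1I.2]
    refine ⟨hm2, ?_⟩
    by_contra hm3
    push_neg at hm3
    have hm3' : g (g (g m)) < q := hm3
    obtain ⟨hgmq, hQl, c, hc, hgmc, hcq⟩ := hsetup hm2
    have hca : a ≤ c := hgm_a.trans hgmc.le
    have hcm : c ≤ m := (hcq.trans_le hq2).le
    -- the right turning point d
    obtain ⟨d, hdm, hdb, hd1, hd3⟩ :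
        ∃ d, m ≤ d ∧ d ≤ b ∧ (∀ {x : ℝ}, m ≤ x → x ≤ d → g x ≤ m) ∧
          (∀ {x : ℝ}, d < x → x ≤ b → m < g x) := by
      rcases le_or_gt m (g b) with h | h
      · obtain ⟨d, hd_mem, hd⟩ : ∃ d ∈ Set.Icc m b, g d = m := by
          have h0 : m ∈ Set.Icc (g m) (g b) := ⟨hgm_le_m, h⟩
          obtain ⟨d, h1, h2⟩ :=
            intermediate_value_Icc hmb (hcont.mono (Set.Icc_subset_Icc ham le_rfl)) h0
          exact ⟨d, h1, h2⟩
        refine ⟨d, hd_mem.1, hd_mem.2, ?_, ?_⟩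
        · intro x h1 h2
          have := incle h1 h2 hd_mem.2
          rw [hd] at this
          exact this
        · intro x h1 h2
          have := inclt hd_mem.1 h1 h2
          rw [hd] at this
          exact this
      · refine ⟨b, hmb, le_rfl, ?_, ?_⟩
        · intro x h1 h2
          have := incle h1 h2 le_rfl
          linarith
        · intro x h1 h2
          exact absurd (h1.trans_le h2) (lt_irrefl b)
    have hg2mb : g (g m) ≤ b := (hmem hgm_a hgm_mem.2).2
    have hg3a : a ≤ g (g (g m)) := (hmem (hmem hgm_a hgm_mem.2).1 hg2mb).1
    have hg3gm : g m ≤ g (g (g m)) := hminL hgm_a hgm_mem.2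
    have hQlt4 : g q < g (g (g (g m))) := declt hg3a hm3' hq2
    -- L2 : on [g m, d], g∘g ≤ g (g m)
    have hL2 : ∀ {x : ℝ}, g m ≤ x → x ≤ d → g (g x) ≤ g (g m) := by
      intro x h1 h2
      have hxa : a ≤ x := hgm_a.trans h1
      have hxb : x ≤ b := h2.trans hdb
      rcases le_or_gt x c with h | h
      · have hmgx : m ≤ g x := by
          rw [← hc]
          exact decle hxa h hcm
        have hgxg2 : g x ≤ g (g m) := decle hgm_a h1 (h.trans hcm)
        have := hL0 hmgx (hmem hxa hxb).2
        linarith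
      · rcases le_or_gt x m with h' | h'
        · have h1' : g m ≤ g x := decle hxa h' le_rfl
          have h2' : g x ≤ m := by
            rw [← hc]
            exact decle hca h.le h'
          exact decle hgm_a h1' h2'
        · have h1' : g m ≤ g x := incle le_rfl h'.le hxb
          have h2' : g x ≤ m := hd1 h'.le h2
          exact decle hgm_a h1' h2'
    -- L3 : beyond d, g∘g < id
    have hL3 : ∀ {x : ℝ}, d < x → x ≤ b → g (g x) < x := by
      intro x h1 h2
      have h3 : m < g x := hd3 h1 h2
      have h4 : g x < x := hL0 (hdm.trans h1.le) h2
      have h5 : g (g x) < g x := hL0 h3.le (h4.le.trans h2)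
      linarith
    -- strict monotonicity of g∘g on the three branches
    have hdecB1 : ∀ {x y : ℝ}, g m ≤ x → x < y → y ≤ c → g (g y) < g (g x) := by
      intro x y h1 h2 h3
      have hya : a ≤ y := hgm_a.trans (h1.trans h2.le)
      have hgyx : g y < g x := declt (hgm_a.trans h1) h2 (h3.trans hcm)
      have hm_le_gy : m ≤ g y := by
        rw [← hc]
        exact decle hya h3 hcm
      have hgxb : g x ≤ b := (hmem (hgm_a.trans h1) ((h2.le.trans h3).trans (hcm.trans hmb))).2
      exact inclt hm_le_gy hgyx hgxb
    have hincB2 : ∀ {x y : ℝ}, c ≤ x → x < y → y ≤ m → g (g x) < g (g y) := by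
      intro x y h1 h2 h3
      have hgyx : g y < g x := declt (hca.trans h1) h2 h3
      have h1' : g x ≤ m := by
        rw [← hc]
        exact decle hca h1 (h2.le.trans h3)
      have h2' : a ≤ g y := (hmem (hca.trans (h1.trans h2.le)) (h3.trans hmb)).1
      exact declt h2' hgyx h1'
    have hdecB3 : ∀ {x y : ℝ}, m ≤ x → x < y → y ≤ d → g (g y) < g (g x) := by
      intro x y h1 h2 h3
      have hgxy : g x < g y := inclt h1 h2 (h3.trans hdb)
      have h2' : a ≤ g x := (hmem (ham.trans h1) ((h2.le.trans h3).trans hdb)).1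
      exact declt h2' hgxy (hd1 (h1.trans h2.le) h3)
    -- L8 : on [g m, c], g∘g ≤ g³ m
    have hL8 : ∀ {x : ℝ}, g m ≤ x → x ≤ c → g (g x) ≤ g (g (g m)) := by
      intro x h1 h2
      rcases eq_or_lt_of_le h1 with he | h
      · rw [← he]
      · exact (hdecB1 le_rfl h h2).le
    have hg2m_le_d : g (g m) ≤ d := by
      by_contra hcon
      push_neg at hcon
      have := hd3 hcon hg2mb
      linarith
    -- classification of fixed points of g∘g
    have hfixcls : ∀ {x : ℝ}, a ≤ x → x ≤ b → g (g x) = x →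
        (g m ≤ x ∧ x ≤ g (g (g m)) ∧ x < c) ∨ (q ≤ x ∧ x ≤ g q) ∨
          (m < x ∧ x ≤ d ∧ g (g (g (g m))) ≤ x) := by
      intro x hxa hxb hfix
      have hxgm : g m ≤ x := by
        have := hminL hxa hxb
        rw [hfix] at this
        exact this
      rcases le_or_gt x m with hxm | hxm
      · rcases lt_or_ge x c with hxc | hxc
        · left
          refine ⟨hxgm, ?_, hxc⟩
          have := hL8 hxgm hxc.le
          rw [hfix] at this
          exact this
        · right; left
          have hgx2 : g x ≤ m := by
            rw [← hc]
            exact decle hca hxc hxm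
          have hgx1 : a ≤ g x := (hmem hxa hxb).1
          have hxP : x ∈ P := ⟨⟨hxa, hxm⟩, ⟨hgx1, hgx2⟩, hfix⟩
          have hgxP : g x ∈ P := by
            refine ⟨⟨hgx1, hgx2⟩, ?_, ?_⟩
            · rw [hfix]; exact ⟨hxa, hxm⟩
            · show g (g (g x)) = g x
              rw [hfix]
          refine ⟨hqmin _ hxP, ?_⟩
          have := decle hq1 (hqmin _ hgxP) hgx2
          rw [hfix] at this
          exact this
      · right; right
        have hxd : x ≤ d := by
          by_contra hcon
          push_neg at hcon
          have := hL3 hcon hxb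
          rw [hfix] at this
          exact lt_irrefl _ this
        have hy1 : g m ≤ g x := incle le_rfl hxm.le hxb
        have hy2 : g x ≤ m := hd1 hxm.le hxd
        have hyfix : g (g (g x)) = g x := by rw [hfix]
        have hyc : g x < c := by
          have hcc : g c < g (g x) := by
            rw [hc, hfix]
            exact hxm
          exact decrev_lt hca hcm ((hmem hxa hxb).1) hy2 hcc
        have hyle : g x ≤ g (g (g m)) := by
          have := hL8 hy1 hyc.le
          rw [hyfix] at this
          exact this
        have hg3m : g (g (g m)) ≤ m := hm3'.le.trans hq2
        refine ⟨hxm, hxd, ?_⟩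
        have := decle ((hmem hxa hxb).1) hyle hg3m
        rw [hfix] at this
        exact this
    have hF := hfixcls hx₁.1 hx₁.2 e11'
    have hx2gm : g m ≤ x₂ := by
      have := hminL hx₃.1 hx₃.2
      rw [e32'] at this
      exact this
    -- Main case analysis on the position of x₂
    rcases le_or_gt x₂ c with hx2c | hx2c
    · -- x₂ ∈ [g m, c]
      have hx1le : x₁ ≤ g (g (g m)) := by
        have := hL8 hx2gm hx2c
        rw [e21'] at this
        exact this
      rcases hF with ⟨hF1, hF2, hF3⟩ | ⟨hF1, hF2⟩ | ⟨hF1, hF2, hF3⟩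
      · rcases lt_trichotomy x₁ x₂ with h | h | h
        · have := hdecB1 hF1 h hx2c
          rw [e21', e11'] at this
          exact lt_irrefl _ this
        · exact hx12ne h
        · have := hdecB1 hx2gm h hF3.le
          rw [e21', e11'] at this
          exact lt_irrefl _ this
      · linarith
      · linarith [hq2]
    · rcases le_or_gt x₂ m with hx2m | hx2m
      · -- x₂ ∈ (c, m]
        rcases hF with ⟨hF1, hF2, hF3⟩ | ⟨hF1, hF2⟩ | ⟨hF1, hF2, hF3⟩
        · obtain ⟨h1, h2⟩ : x₁ < x₃ ∧ x₃ < x₂ := by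
            rcases hord with h | h
            · exact h
            · exact absurd (h.1.trans h.2) (by linarith [hF3, hx2c] : ¬ x₂ < x₁)
          have hx2q : x₂ < q := by
            by_contra hcon
            push_neg at hcon
            rcases eq_or_lt_of_le hcon with he | hlt
            · rw [← he, hggq] at e21'
              linarith
            · have := hincB2 hcq.le hlt hx2m
              rw [hggq, e21'] at this
              linarith
          rcases le_or_gt x₃ c with h3c | h3c
          · have := hdecB1 hF1 h1 h3c
            rw [e32', e11'] at this
            linarith
          · have := hincB2 h3c.le h2 hx2m
            rw [e32', e21'] at this
            linarith
        · rcases lt_trichotomy x₁ x₂ with h | h | h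
          · have := hincB2 (hcq.le.trans hF1) h hx2m
            rw [e11', e21'] at this
            exact lt_irrefl _ this
          · exact hx12ne h
          · have := hincB2 hx2c.le h (hF2.trans hQl.le)
            rw [e11', e21'] at this
            exact lt_irrefl _ this
        · obtain ⟨h1, h2⟩ : x₂ < x₃ ∧ x₃ < x₁ := by
            rcases hord with h | h
            · exact absurd (h.1.trans h.2) (by linarith [hF1, hx2m] : ¬ x₁ < x₂)
            · exact h
          have hx2Q : g q < x₂ := by
            by_contra hcon
            push_neg at hcon
            rcases eq_or_lt_of_le hcon with he | hlt
            · rw [he, hggq] at e21'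
              linarith
            · have := hincB2 hx2c.le hlt hgq2
              rw [e21', hggq] at this
              linarith [hF3, hQlt4]
          rcases le_or_gt x₃ m with h3m | h3m
          · have := hincB2 hx2c.le h1 h3m
            rw [e21', e32'] at this
            linarith
          · have := hdecB3 h3m.le h2 hF2
            rw [e11', e32'] at this
            linarith
      · rcases le_or_gt x₂ d with hx2d | hx2d
        · -- x₂ ∈ (m, d]
          rcases hF with ⟨hF1, hF2, hF3⟩ | ⟨hF1, hF2⟩ | ⟨hF1, hF2, hF3⟩
          · have hx2g2 : g (g m) < x₂ := by
              rcases lt_or_ge (g (g m)) x₂ with h | hcon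
              · exact h
              · exfalso
                rcases eq_or_lt_of_le hcon with he | hlt
                · rw [he] at e21'
                  linarith [hQlt4, hqQ]
                · have := hdecB3 hx2m.le hlt hg2m_le_d
                  rw [e21'] at this
                  linarith [hQlt4, hqQ]
            obtain ⟨h1, h2⟩ : x₁ < x₃ ∧ x₃ < x₂ := by
              rcases hord with h | h
              · exact h
              · exact absurd (h.1.trans h.2) (by linarith [hq2] : ¬ x₂ < x₁)
            have := hL2 (hF1.trans h1.le) (h2.le.trans hx2d)
            rw [e32'] at this
            linarith
          · have hx2g2 : g (g m) < x₂ := by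
              rcases lt_or_ge (g (g m)) x₂ with h | hcon
              · exact h
              · exfalso
                rcases eq_or_lt_of_le hcon with he | hlt
                · rw [he] at e21'
                  linarith [hQlt4]
                · have := hdecB3 hx2m.le hlt hg2m_le_d
                  rw [e21'] at this
                  linarith [hQlt4]
            obtain ⟨h1, h2⟩ : x₁ < x₃ ∧ x₃ < x₂ := by
              rcases hord with h | h
              · exact h
              · exact absurd (h.1.trans h.2) (by linarith [hQl] : ¬ x₂ < x₁)
            have := hL2 ((hgmq.le.trans hF1).trans h1.le) (h2.le.trans hx2d)
            rw [e32'] at this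
            linarith
          · rcases lt_trichotomy x₁ x₂ with h | h | h
            · have := hdecB3 hF1.le h hx2d
              rw [e21', e11'] at this
              exact lt_irrefl _ this
            · exact hx12ne h
            · have := hdecB3 hx2m.le h hF2
              rw [e21', e11'] at this
              exact lt_irrefl _ this
        · -- x₂ ∈ (d, b]
          have hx1x2 : x₁ < x₂ := by
            have := hL3 hx2d hx₂.2
            rw [e21'] at this
            exact this
          obtain ⟨h1, h2⟩ : x₁ < x₃ ∧ x₃ < x₂ := by
            rcases hord with h | h
            · exact h
            · exact absurd (h.1.trans h.2) (not_lt.mpr hx1x2.le)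
          rcases le_or_gt x₃ d with h3d | h3d
          · have hx1gm : g m ≤ x₁ := by
              have := hminL hx₂.1 hx₂.2
              rw [e21'] at this
              exact this
            have := hL2 (hx1gm.trans h1.le) h3d
            rw [e32'] at this
            linarith [hg2m_le_d]
          · have := hL3 h3d hx₃.2
            rw [e32'] at this
            linarith

  · rintro ⟨hm2', hm3'⟩
    have hm2 : m < g (g m) := hm2'
    have hm3 : q ≤ g (g (g m)) := hm3'
    obtain ⟨hgmq, hQl, c, hc, hgmc, hcq⟩ := hsetup hm2
    have hca : a ≤ c := hgm_a.trans hgmc.le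
    have hcm : c ≤ m := (hcq.trans_le hq2).le
    have hsub1 : Set.Icc (g m) c ⊆ Set.Icc a b :=
      Set.Icc_subset_Icc hgm_a (hcm.trans hmb)
    have hgg_cont1 : ContinuousOn (fun x => g (g x)) (Set.Icc (g m) c) := by
      apply ContinuousOn.comp hcont (hcont.mono hsub1)
      intro x hx; exact hmaps (hsub1 hx)
    obtain ⟨x₂, hx2mem, hx2⟩ : ∃ x ∈ Set.Icc (g m) c, g (g x) = q := by
      have h0 : q ∈ Set.Icc (g (g c)) (g (g (g m))) := by
        rw [hc]
        exact ⟨hgmq.le, hm3⟩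
      obtain ⟨x, h1, h2⟩ := intermediate_value_Icc' hgmc.le hgg_cont1 h0
      exact ⟨x, h1, h2⟩
    have hx2c : x₂ < c := by
      rcases eq_or_lt_of_le hx2mem.2 with he | h
      · exfalso
        rw [he, hc] at hx2
        linarith
      · exact h
    have hsub2 : Set.Icc c q ⊆ Set.Icc a b :=
      Set.Icc_subset_Icc hca (hq2.trans hmb)
    have hgg_cont2 : ContinuousOn (fun x => g (g x)) (Set.Icc c q) := by
      apply ContinuousOn.comp hcont (hcont.mono hsub2)
      intro x hx; exact hmaps (hsub2 hx)
    obtain ⟨x₃, hx3mem, hx3⟩ : ∃ x ∈ Set.Icc c q, g (g x) = x₂ := by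
      have h0 : x₂ ∈ Set.Icc (g (g c)) (g (g q)) := by
        rw [hc, hggq]
        exact ⟨hx2mem.1, (hx2c.trans hcq).le⟩
      obtain ⟨x, h1, h2⟩ := intermediate_value_Icc hcq.le hgg_cont2 h0
      exact ⟨x, h1, h2⟩
    have hx3q : x₃ < q := by
      rcases eq_or_lt_of_le hx3mem.2 with he | h
      · exfalso
        rw [he, hggq] at hx3
        have : x₂ < q := hx2c.trans hcq
        linarith
      · exact h
    refine ⟨q, ⟨hq1, hq2.trans hmb⟩, x₂, ⟨hgm_a.trans hx2mem.1, (hx2mem.2.trans hcm).trans hmb⟩,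
      x₃, ⟨hca.trans hx3mem.1, (hx3mem.2.trans hq2).trans hmb⟩, hx2, hggq, hx3,
      Or.inr ⟨hx2c.trans_le hx3mem.1, hx3q⟩⟩
end

section
/- Let α, β ∈ (0,1), λ > 0, f(p) = p + λ(2β/p − 4(1−α)), and s = √(2λβ). If β/(8(1−α)²) < λ < β/(2(1−α)²), then f(s) < s < f²(s) + s; in particular the interval E = [f(s), f²(s) + s] is nondegenerate and contains s in its interior. -/
/-- For the Walras–Samuelson map `f(p) = p + λ(2β/p − 4(1−α))` with
`s = √(2λβ)`, if `β/(8(1−α)²) < λ < β/(2(1−α)²)` then `f(s) < s < f²(s) + s`,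
so the interval `E = [f(s), f²(s) + s]` is nondegenerate with `s` in its interior. -/
theorem stmt_2 (α β lam : ℝ) (hα : α ∈ Set.Ioo (0:ℝ) 1) (hβ : β ∈ Set.Ioo (0:ℝ) 1)
    (hlam : 0 < lam)
    (f : ℝ → ℝ) (hf : ∀ p : ℝ, f p = p + lam * (2 * β / p - 4 * (1 - α)))
    (s : ℝ) (hs : s = Real.sqrt (2 * lam * β))
    (h1 : β / (8 * (1 - α) ^ 2) < lam) (h2 : lam < β / (2 * (1 - α) ^ 2)) :
    f s < s ∧ s < f (f s) + s := by
  obtain ⟨hα0, hα1⟩ := hα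
  obtain ⟨hβ0, hβ1⟩ := hβ
  have hA : (0:ℝ) < 1 - α := by linarith
  have hprod : (0:ℝ) < 2 * lam * β := by positivity
  have hspos : 0 < s := by rw [hs]; exact Real.sqrt_pos.mpr hprod
  have hs2 : s ^ 2 = 2 * lam * β := by
    rw [hs, Real.sq_sqrt hprod.le]
  have hb1 : β < 8 * lam * (1 - α) ^ 2 := by
    have := (div_lt_iff₀ (by positivity)).mp h1
    nlinarith
  have hb2 : 2 * lam * (1 - α) ^ 2 < β := by
    have := (lt_div_iff₀ (by positivity)).mp h2
    nlinarith
  have s_lt : s < 4 * lam * (1 - α) := by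
    refine lt_of_pow_lt_pow_left₀ 2 (by positivity) ?_
    nlinarith
  have c_lt : 2 * lam * (1 - α) < s := by
    refine lt_of_pow_lt_pow_left₀ 2 hspos.le ?_
    nlinarith
  have key : lam * (2 * β / s) = s := by
    field_simp
    nlinarith [hs2]
  have hfs : f s = 2 * s - 4 * lam * (1 - α) := by
    rw [hf]
    have : lam * (2 * β / s - 4 * (1 - α)) = lam * (2 * β / s) - 4 * lam * (1 - α) := by ring
    rw [this, key]; ring
  have hfs_lt : f s < s := by rw [hfs]; linarith
  have tpos : 0 < f s := by rw [hfs]; linarith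
  have key2 : lam * (2 * β / f s) * f s = s ^ 2 := by
    field_simp
    nlinarith [hs2]
  have hffs : f (f s) = f s + lam * (2 * β / f s) - 4 * lam * (1 - α) := by
    rw [hf (f s)]; ring
  have hffs_pos : 0 < f (f s) := by
    rw [hffs]
    have amgm : (f s - s) ^ 2 ≥ 0 := sq_nonneg _
    have h3 : f s + lam * (2 * β / f s) ≥ 2 * s := by
      rw [ge_iff_le, ← sub_nonneg]
      have := mul_pos tpos tpos
      have hdiv : (f s + lam * (2 * β / f s) - 2 * s) * f s ≥ 0 := by
        nlinarith [key2]
      nlinarith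
    linarith
  exact ⟨hfs_lt, by linarith⟩
end

section
/- Let α, β ∈ (0,1), λ > 0, f(p) = p + λ(2β/p − 4(1−α)), s = √(2λβ), and E = [f(s), f²(s) + s]. If β/(8(1−α)²) < λ < β/(2(1−α)²), then f maps E into E, f is strictly decreasing on [f(s), s] and strictly increasing on [s, f²(s) + s], f(f(s)) > f(s), f(f²(s) + s) < f²(s) + s, and f(x) < x for all x ∈ [s, f²(s) + s). -/
/-- Under `β/(8(1−α)²) < λ < β/(2(1−α)²)`, the map `f` sends
`E = [f(s), f²(s)+s]` into itself, is strictly decreasing on `[f(s), s]` and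
strictly increasing on `[s, f²(s)+s]`, satisfies `f(f(s)) > f(s)`,
`f(f²(s)+s) < f²(s)+s`, and `f(x) < x` for all `x ∈ [s, f²(s)+s)`. -/
theorem stmt_3 (α β lam : ℝ) (hα : α ∈ Set.Ioo (0:ℝ) 1) (hβ : β ∈ Set.Ioo (0:ℝ) 1)
    (hlam : 0 < lam)
    (f : ℝ → ℝ) (hf : ∀ p : ℝ, f p = p + lam * (2 * β / p - 4 * (1 - α)))
    (s : ℝ) (hs : s = Real.sqrt (2 * lam * β))
    (h1 : β / (8 * (1 - α) ^ 2) < lam) (h2 : lam < β / (2 * (1 - α) ^ 2)) :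
    Set.MapsTo f (Set.Icc (f s) (f (f s) + s)) (Set.Icc (f s) (f (f s) + s)) ∧
    StrictAntiOn f (Set.Icc (f s) s) ∧
    StrictMonoOn f (Set.Icc s (f (f s) + s)) ∧
    f (f s) > f s ∧
    f (f (f s) + s) < f (f s) + s ∧
    ∀ x ∈ Set.Ico s (f (f s) + s), f x < x := by
  obtain ⟨hα0, hα1⟩ := hα
  obtain ⟨hβ0, hβ1⟩ := hβ
  have h1α : 0 < 1 - α := by linarith
  set c := lam * (1 - α) with hc
  have hc0 : 0 < c := mul_pos hlam h1α
  have hs0 : 0 < s := by rw [hs]; positivity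
  have hs2 : s ^ 2 = 2 * lam * β := by
    rw [hs, Real.sq_sqrt (by positivity)]
  have h4c : s < 4 * c := by
    have hb : β < lam * (8 * (1 - α) ^ 2) := (div_lt_iff₀ (by positivity)).mp h1
    nlinarith [hs2, hs0, hc0]
  have h2c : 2 * c < s := by
    have hb : lam * (2 * (1 - α) ^ 2) < β := (lt_div_iff₀ (by positivity)).mp h2
    nlinarith [hs2, hs0, hc0]
  have key : ∀ a b : ℝ, 0 < a → 0 < b →
      f b - f a = (b - a) * (a * b - 2 * lam * β) / (a * b) := by
    intro a b ha hb
    rw [hf, hf]; field_simp; ring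
  have keyx : ∀ x : ℝ, 0 < x → f x - x = (2 * lam * β - 4 * c * x) / x := by
    intro x hx
    rw [hf, hc]; field_simp; ring
  have keymin : ∀ x : ℝ, 0 < x → f x - f s = (x - s) ^ 2 / x := by
    intro x hx
    have h := key s x hs0 hx
    rw [h, ← hs2]
    rw [div_eq_div_iff (by positivity) (ne_of_gt hx)]
    ring
  have hfs : f s = 2 * s - 4 * c := by
    rw [hf, hc]
    have h' : lam * (2 * β / s) = s := by
      rw [mul_div_assoc']
      rw [div_eq_iff (ne_of_gt hs0)]
      nlinarith [hs2]
    rw [mul_sub, h']; ring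
  have hfs0 : 0 < f s := by rw [hfs]; linarith
  have hfsls : f s < s := by rw [hfs]; linarith
  have hmin : ∀ x : ℝ, 0 < x → f s ≤ f x := by
    intro x hx
    have h := keymin x hx
    have h2' : 0 ≤ (x - s) ^ 2 / x := div_nonneg (sq_nonneg _) hx.le
    linarith
  have hffs : f s < f (f s) := by
    have h := keymin (f s) hfs0
    have hne : 0 < (f s - s) ^ 2 := by nlinarith
    have : 0 < (f s - s) ^ 2 / f s := div_pos hne hfs0
    linarith
  have hflt : ∀ x : ℝ, s ≤ x → f x < x := by
    intro x hx
    have hx0 : 0 < x := lt_of_lt_of_le hs0 hx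
    have h := keyx x hx0
    have hnum : 2 * lam * β - 4 * c * x < 0 := by nlinarith [hs2]
    have := div_neg_of_neg_of_pos hnum hx0
    linarith
  have hffs0 : 0 < f (f s) := lt_trans hfs0 hffs
  have hanti : StrictAntiOn f (Set.Icc (f s) s) := by
    intro a ha b hb hab
    have ha0 : 0 < a := lt_of_lt_of_le hfs0 ha.1
    have hb0 : 0 < b := lt_of_lt_of_le hfs0 hb.1
    have h := key a b ha0 hb0
    have hnum : a * b - 2 * lam * β < 0 := by
      have e1 : a * b ≤ a * s := mul_le_mul_of_nonneg_left hb.2 ha0.le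
      have e2 : a * s < s * s := mul_lt_mul_of_pos_right (lt_of_lt_of_le hab hb.2) hs0
      nlinarith [hs2]
    have hd : (b - a) * (a * b - 2 * lam * β) / (a * b) < 0 :=
      div_neg_of_neg_of_pos (mul_neg_of_pos_of_neg (sub_pos.mpr hab) hnum)
        (mul_pos ha0 hb0)
    linarith [h, hd]
  have hmono : StrictMonoOn f (Set.Icc s (f (f s) + s)) := by
    intro a ha b hb hab
    have ha0 : 0 < a := lt_of_lt_of_le hs0 ha.1
    have hb0 : 0 < b := lt_of_lt_of_le hs0 hb.1
    have h := key a b ha0 hb0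
    have hnum : 0 < a * b - 2 * lam * β := by
      have e1 : s * b ≤ a * b := mul_le_mul_of_nonneg_right ha.1 hb0.le
      have e2 : s * s < s * b := mul_lt_mul_of_pos_left (lt_of_le_of_lt ha.1 hab) hs0
      nlinarith [hs2]
    have hd : 0 < (b - a) * (a * b - 2 * lam * β) / (a * b) :=
      div_pos (mul_pos (sub_pos.mpr hab) hnum) (mul_pos ha0 hb0)
    linarith [h, hd]
  refine ⟨?_, hanti, hmono, hffs, hflt _ (by linarith), fun x hx => hflt x hx.1⟩
  intro x hx
  obtain ⟨hx1, hx2⟩ := hx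
  have hx0 : 0 < x := lt_of_lt_of_le hfs0 hx1
  refine ⟨hmin x hx0, ?_⟩
  rcases le_total x s with hxs | hsx
  · have : f x ≤ f (f s) :=
      hanti.antitoneOn ⟨le_refl _, hfsls.le⟩ ⟨hx1, hxs⟩ hx1
    linarith
  · have := hflt x hsx
    linarith
end

section
/- Let α, β ∈ (0,1), λ > 0, f(p) = p + λ(2β/p − 4(1−α)), s = √(2λβ), and E = [f(s), f²(s) + s]. Assume β/(8(1−α)²) < λ < β/(2(1−α)²). Then the second iterate of the restriction of f to E is turbulent if and only if 25β/(72(1−α)²) ≤ λ. -/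
noncomputable def gmap (a x : ℝ) : ℝ := x + a / x - a

lemma g_one (a : ℝ) : gmap a 1 = 1 := by simp [gmap]

lemma g_self (a : ℝ) (ha : a ≠ 0) : gmap a a = 1 := by
  rw [gmap, div_self ha]; ring

lemma g_min (a t x : ℝ) (hat : a = t ^ 2) (ht : 0 < t) (hx : 0 < x) :
    2 * t - a ≤ gmap a x := by
  have h : 2 * t - x ≤ t ^ 2 / x := by
    rw [le_div_iff₀ hx]; nlinarith [sq_nonneg (x - t)]
  simp only [gmap, hat]; linarith

lemma g_dec (a t x y : ℝ) (hat : a = t ^ 2) (hx : 0 < x) (hxy : x < y) (hy : y ≤ t) :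
    gmap a y < gmap a x := by
  have hy0 : 0 < y := hx.trans hxy
  rw [gmap, gmap, div_eq_mul_inv, div_eq_mul_inv]
  have h1 : x * y < a := by nlinarith
  have h2 : (0:ℝ) < x * y := by positivity
  rw [sub_lt_sub_iff_right, ← sub_pos]
  have : x + a * x⁻¹ - (y + a * y⁻¹) = (y - x) * (a - x * y) / (x * y) := by
    field_simp; ring
  rw [this]
  exact div_pos (mul_pos (by linarith) (by linarith)) h2

lemma g_inc (a t x y : ℝ) (hat : a = t ^ 2) (ht : 0 < t) (hx : t ≤ x) (hxy : x < y) :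
    gmap a x < gmap a y := by
  have hx0 : 0 < x := ht.trans_le hx
  have hy0 : 0 < y := hx0.trans hxy
  rw [gmap, gmap, div_eq_mul_inv, div_eq_mul_inv]
  have h1 : a < x * y := by nlinarith
  have h2 : (0:ℝ) < x * y := by positivity
  rw [sub_lt_sub_iff_right, ← sub_pos]
  have : y + a * y⁻¹ - (x + a * x⁻¹) = (y - x) * (x * y - a) / (x * y) := by
    field_simp; ring
  rw [this]
  exact div_pos (mul_pos (by linarith) (by linarith)) h2

lemma g_contOn (a : ℝ) (s : Set ℝ) (hs : ∀ x ∈ s, x ≠ 0) : ContinuousOn (gmap a) s := by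
  unfold gmap
  exact ((continuousOn_id.add (continuousOn_const.div continuousOn_id hs)).sub
    continuousOn_const)

lemma fwd (a t : ℝ) (hat : a = t ^ 2) (ht1 : 5 / 3 ≤ t) (ht2 : t < 2) :
    ∃ x₁ ∈ Set.Icc (gmap a t) (gmap a (gmap a t) + t),
      ∃ x₂ ∈ Set.Icc (gmap a t) (gmap a (gmap a t) + t),
        ∃ x₃ ∈ Set.Icc (gmap a t) (gmap a (gmap a t) + t),
          gmap a (gmap a x₂) = x₁ ∧ gmap a (gmap a x₁) = x₁ ∧ gmap a (gmap a x₃) = x₂ ∧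
            ((x₁ < x₃ ∧ x₃ < x₂) ∨ (x₂ < x₃ ∧ x₃ < x₁)) := by
  have ht0 : (0:ℝ) < t := by linarith
  have ht1' : (1:ℝ) < t := by linarith
  have ha1 : 1 < a := by nlinarith
  have ha0 : a ≠ 0 := by nlinarith
  set m : ℝ := gmap a t with hmdef
  have hm : m = 2 * t - t ^ 2 := by
    rw [hmdef, gmap, hat]; field_simp; ring
  have hm0 : 0 < m := by rw [hm]; nlinarith
  have hm1 : m < 1 := by rw [hm]; nlinarith
  set M : ℝ := gmap a m with hMdef
  have hMval : M * (2 - t) = 2 * t ^ 3 - 6 * t ^ 2 + 5 * t := by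
    rw [hMdef, gmap, hat, hm]
    have h2t : (2:ℝ) - t ≠ 0 := by linarith
    have hmne : 2 * t - t ^ 2 ≠ 0 := by nlinarith
    field_simp
    ring
  have hMa : a ≤ M := by
    nlinarith [hMval, mul_nonneg (mul_nonneg ht0.le (by linarith : (0:ℝ) ≤ 3 * t - 5))
      (by linarith : (0:ℝ) ≤ t - 1)]
  have hM1 : 1 < M := by linarith
  -- continuity for IVT
  have hmaps : ∀ x ∈ Set.Icc (1:ℝ) t, gmap a x ≠ 0 := by
    intro x hx
    have hx0 : 0 < x := lt_of_lt_of_le one_pos hx.1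
    have := g_min a t x hat ht0 hx0
    have : m ≤ gmap a x := by rw [hm]; nlinarith [this]
    nlinarith [this]
  have hcont : ContinuousOn (fun x => gmap a (gmap a x)) (Set.Icc (1:ℝ) t) := by
    apply ContinuousOn.comp (g_contOn a {x : ℝ | x ≠ 0} (fun x hx => hx))
      (g_contOn a (Set.Icc 1 t) (fun x hx => by
        have : (0:ℝ) < x := lt_of_lt_of_le one_pos hx.1
        exact ne_of_gt this))
    intro x hx
    exact hmaps x hx
  have hgg1 : gmap a (gmap a 1) = 1 := by rw [g_one, g_one]
  have hggt : gmap a (gmap a t) = M := rfl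
  have hivt := intermediate_value_Icc (by linarith : (1:ℝ) ≤ t) hcont
  have hmem : a ∈ Set.Icc (gmap a (gmap a 1)) (gmap a (gmap a t)) := by
    rw [hgg1, hggt]; exact ⟨le_of_lt ha1, hMa⟩
  obtain ⟨x₃, hx₃, hggx₃⟩ := hivt hmem
  refine ⟨1, ⟨by nlinarith [hm1], by linarith⟩, a, ⟨by linarith, by linarith⟩,
    x₃, ⟨by linarith [hx₃.1], by linarith [hx₃.2]⟩, ?_, ?_, ?_, ?_⟩
  · rw [g_self a ha0, g_one]
  · rw [g_one, g_one]
  · exact hggx₃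
  · left
    constructor
    · rcases lt_or_eq_of_le hx₃.1 with h | h
      · exact h
      · exfalso
        have hg : gmap a (gmap a x₃) = a := hggx₃
        rw [← h, g_one, g_one] at hg
        linarith
    · have : x₃ ≤ t := hx₃.2
      nlinarith

lemma g_root (a q z : ℝ) (hq : q ≠ 0) (h : a = (z + a - q) * q) : gmap a q = z := by
  have hz : a / q = z + a - q := by rw [div_eq_iff hq]; linear_combination h
  rw [gmap, hz]; ring

lemma g_eq_quad (a u y : ℝ) (hu : u ≠ 0) (h : gmap a u = y) :
    u ^ 2 + a - (a + y) * u = 0 := by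
  rw [gmap] at h
  have h2 : (u + a / u - a) * u = y * u := by rw [h]
  have h3 : u * u + a - a * u = y * u := by rw [← h2]; field_simp
  linear_combination h3

lemma g_mul (a u y : ℝ) (hu : u ≠ 0) (h : gmap a u = y) :
    y * u = u ^ 2 + a - a * u := by
  have := g_eq_quad a u y hu h
  linear_combination -this

lemma two_le_a (a : ℝ) (ha1 : 1 < a) (hD : 0 ≤ a ^ 2 - 2 * a) : 2 ≤ a := by
  by_contra h; push_neg at h
  nlinarith [mul_pos (by linarith : (0:ℝ) < a) (by linarith : (0:ℝ) < 2 - a)]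

lemma d_bounds (a d : ℝ) (ha2 : 2 < a) (hd0 : 0 ≤ d) (hd2 : d ^ 2 = a ^ 2 - 2 * a) :
    0 < d ∧ d < a ∧ (a - d) / 2 < 1 ∧ 1 < a - d := by
  have hd : 0 < d := by
    rcases eq_or_lt_of_le hd0 with h | h
    · exfalso; nlinarith [mul_pos (by linarith : (0:ℝ) < a) (by linarith : (0:ℝ) < a - 2)]
    · exact h
  have hda : d < a := by
    have h1 : d ^ 2 < a ^ 2 := by nlinarith
    exact lt_of_pow_lt_pow_left₀ 2 (by linarith) h1
  have hqm : (a - d) / 2 < 1 := by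
    by_contra h; push_neg at h
    have h1 : d ≤ a - 2 := by linarith
    have h2 : d ^ 2 ≤ (a - 2) ^ 2 := by nlinarith
    nlinarith
  have h2qm : 1 < a - d := by
    have h1 : d ^ 2 < (a - 1) ^ 2 := by nlinarith
    have := lt_of_pow_lt_pow_left₀ 2 (by linarith : (0:ℝ) ≤ a - 1) h1
    linarith
  exact ⟨hd, hda, hqm, h2qm⟩

lemma x1_le_M (a t M x₁ : ℝ) (hat : a = t ^ 2) (ht1 : 1 < t) (ht2 : t < 2)
    (hMval : M * (2 - t) = 2 * t ^ 3 - 6 * t ^ 2 + 5 * t)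
    (hq : 2 * x₁ ^ 2 - 2 * a * x₁ + a = 0) : x₁ ≤ M := by
  have ht0 : (0:ℝ) < t := by linarith
  have h2t : (0:ℝ) < 2 - t := by linarith
  have hsq1 : (2 * x₁ - a) ^ 2 = a ^ 2 - 2 * a := by linear_combination 2 * hq
  have h2Mval : (2 * M - a) * (2 - t) = 5 * t ^ 3 - 14 * t ^ 2 + 10 * t := by
    linear_combination 2 * hMval - (2 - t) * hat
  have hpos : (0:ℝ) < 5 * t ^ 3 - 14 * t ^ 2 + 10 * t := by
    nlinarith [mul_pos ht0 (by nlinarith [sq_nonneg (5 * t - 7)] :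
      (0:ℝ) < 5 * t ^ 2 - 14 * t + 10)]
  have h2Ma : 0 < 2 * M - a := by nlinarith [h2Mval, hpos, h2t]
  have key : ((2 * M - a) * (2 - t)) ^ 2 - (a ^ 2 - 2 * a) * (2 - t) ^ 2
      = 2 * t ^ 2 * ((2 * t - 3) ^ 2 * (3 * t ^ 2 - 8 * t + 6)) := by
    rw [h2Mval, hat]; ring
  have hq2 : (0:ℝ) < 3 * t ^ 2 - 8 * t + 6 := by nlinarith [sq_nonneg (3 * t - 4)]
  have hsqle : (a ^ 2 - 2 * a) * (2 - t) ^ 2 ≤ (2 * M - a) ^ 2 * (2 - t) ^ 2 := by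
    have hnn : (0:ℝ) ≤ 2 * t ^ 2 * ((2 * t - 3) ^ 2 * (3 * t ^ 2 - 8 * t + 6)) :=
      mul_nonneg (by positivity) (mul_nonneg (sq_nonneg _) hq2.le)
    nlinarith [key]
  have hle : a ^ 2 - 2 * a ≤ (2 * M - a) ^ 2 :=
    le_of_mul_le_mul_right hsqle (by positivity)
  nlinarith [hsq1, hle, h2Ma]

lemma t_lt_32 (a t d : ℝ) (hat : a = t ^ 2) (ht0 : 0 < t) (hd0 : 0 ≤ d)
    (hd2 : d ^ 2 = a ^ 2 - 2 * a) (h3d : 3 * d < a) : t < 3 / 2 := by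
  have ha0 : 0 < a := by nlinarith
  have h9 : (3 * d) ^ 2 < a ^ 2 := by
    have := mul_self_lt_mul_self (by linarith : (0:ℝ) ≤ 3 * d) h3d
    nlinarith [this]
  by_contra h; push_neg at h
  have ha94 : 9 / 4 ≤ a := by nlinarith
  nlinarith [mul_le_mul_of_nonneg_right ha94 ha0.le, hd2, h9]

lemma t_ge_32_facts (a t d M : ℝ) (hat : a = t ^ 2) (ht1 : 1 < t) (ht2 : t < 2)
    (ht32 : 3 / 2 ≤ t) (hd0 : 0 ≤ d) (hd2 : d ^ 2 = a ^ 2 - 2 * a)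
    (hMval : M * (2 - t) = 2 * t ^ 3 - 6 * t ^ 2 + 5 * t) :
    a - d ≤ t ∧ t ≤ (a + d) / 2 ∧ t ≤ M ∧ a - d ≤ (a + d) / 2 := by
  have ht0 : (0:ℝ) < t := by linarith
  refine ⟨?_, ?_, ?_, ?_⟩
  · by_contra h; push_neg at h
    have h1 : d < t ^ 2 - t := by nlinarith
    have h2 : d ^ 2 < (t ^ 2 - t) ^ 2 := by
      have := mul_self_lt_mul_self hd0 h1; nlinarith [this]
    nlinarith [h2, mul_nonneg (by linarith : (0:ℝ) ≤ 2 * t - 3) (sq_nonneg t)]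
  · by_contra h; push_neg at h
    have h1 : d < 2 * t - t ^ 2 := by nlinarith
    have h2 : d ^ 2 < (2 * t - t ^ 2) ^ 2 := by
      have := mul_self_lt_mul_self hd0 h1; nlinarith [this]
    nlinarith [h2, mul_nonneg (by linarith : (0:ℝ) ≤ 2 * t - 3) (sq_nonneg t)]
  · by_contra h; push_neg at h
    have hneg : (M - t) * (2 - t) < 0 :=
      mul_neg_of_neg_of_pos (by linarith) (by linarith)
    have e : (M - t) * (2 - t) = t * ((2 * t - 3) * (t - 1)) := by
      linear_combination hMval
    have pos : 0 ≤ t * ((2 * t - 3) * (t - 1)) :=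
      mul_nonneg ht0.le (mul_nonneg (by linarith) (by linarith))
    rw [e] at hneg; linarith
  · by_contra h; push_neg at h
    have h3d : 3 * d < a := by linarith
    have := t_lt_32 a t d hat ht0 hd0 hd2 h3d
    linarith

lemma auxM (a t d M : ℝ) (hat : a = t ^ 2) (ht1 : 1 < t) (ht32 : t < 3 / 2)
    (hd0 : 0 ≤ d) (hd2 : d ^ 2 = a ^ 2 - 2 * a)
    (hMval : M * (2 - t) = 2 * t ^ 3 - 6 * t ^ 2 + 5 * t) : M < a - d := by
  have ht0 : (0:ℝ) < t := by linarith
  have h2t : (0:ℝ) < 2 - t := by linarith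
  have hAMval : (a - M) * (2 - t) = -3 * t ^ 3 + 8 * t ^ 2 - 5 * t := by
    linear_combination (2 - t) * hat - hMval
  have hR : (0:ℝ) < -3 * t ^ 3 + 8 * t ^ 2 - 5 * t := by
    nlinarith [mul_pos (mul_pos ht0 (by linarith : (0:ℝ) < 5 - 3 * t))
      (by linarith : (0:ℝ) < t - 1)]
  have key : (-3 * t ^ 3 + 8 * t ^ 2 - 5 * t) ^ 2 - (t ^ 4 - 2 * t ^ 2) * (2 - t) ^ 2
      = t ^ 2 * ((3 - 2 * t) * ((3 - 2 * t) * (2 * t ^ 2 - 5 * t + 7 / 2) + 1 / 2)) := by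
    ring
  have hq1 : (0:ℝ) < 3 - 2 * t := by linarith
  have hq2 : (0:ℝ) < 2 * t ^ 2 - 5 * t + 7 / 2 := by nlinarith [sq_nonneg (4 * t - 5)]
  have hbr : (0:ℝ) < (3 - 2 * t) * (2 * t ^ 2 - 5 * t + 7 / 2) + 1 / 2 := by
    nlinarith [mul_pos hq1 hq2]
  have h1 : (d * (2 - t)) ^ 2 < ((a - M) * (2 - t)) ^ 2 := by
    have e1 : (d * (2 - t)) ^ 2 = (t ^ 4 - 2 * t ^ 2) * (2 - t) ^ 2 := by
      rw [mul_pow, hd2, hat]; ring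
    have e2 : ((a - M) * (2 - t)) ^ 2 = (-3 * t ^ 3 + 8 * t ^ 2 - 5 * t) ^ 2 := by
      rw [hAMval]
    rw [e1, e2]
    have pos : (0:ℝ) < t ^ 2 * ((3 - 2 * t) * ((3 - 2 * t) * (2 * t ^ 2 - 5 * t + 7 / 2) + 1 / 2)) :=
      mul_pos (pow_pos ht0 2) (mul_pos hq1 hbr)
    linarith [key]
  have h3 : (0:ℝ) < (a - M) * (2 - t) := by rw [hAMval]; exact hR
  have h2 : d * (2 - t) < (a - M) * (2 - t) :=
    lt_of_pow_lt_pow_left₀ 2 h3.le h1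
  have := (mul_lt_mul_iff_of_pos_right h2t).mp h2
  linarith

set_option maxHeartbeats 1600000 in
lemma rev (a t : ℝ) (hat : a = t ^ 2) (ht1 : 1 < t) (ht5 : t < 5 / 3)
    (x₁ x₂ x₃ : ℝ)
    (m1 : x₁ ∈ Set.Icc (gmap a t) (gmap a (gmap a t) + t))
    (m2 : x₂ ∈ Set.Icc (gmap a t) (gmap a (gmap a t) + t))
    (m3 : x₃ ∈ Set.Icc (gmap a t) (gmap a (gmap a t) + t))
    (e2 : gmap a (gmap a x₂) = x₁) (e1 : gmap a (gmap a x₁) = x₁)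
    (e3 : gmap a (gmap a x₃) = x₂)
    (ord : (x₁ < x₃ ∧ x₃ < x₂) ∨ (x₂ < x₃ ∧ x₃ < x₁)) : False := by
  have ht0 : (0:ℝ) < t := by linarith
  have ht2 : t < 2 := by linarith
  have ha1 : 1 < a := by nlinarith
  have ha0 : (0:ℝ) < a := by linarith
  set m := gmap a t with hmdef
  have hm : m = 2 * t - t ^ 2 := by
    rw [hmdef, gmap, hat]; field_simp; ring
  have hm0 : 0 < m := by rw [hm]; nlinarith
  have hm1 : m < 1 := by rw [hm]; nlinarith
  set M := gmap a m with hMdef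
  have h2t : (0:ℝ) < 2 - t := by linarith
  have hMval : M * (2 - t) = 2 * t ^ 3 - 6 * t ^ 2 + 5 * t := by
    rw [hMdef, gmap, hat, hm]
    have hmne : 2 * t - t ^ 2 ≠ 0 := by nlinarith
    have h2tne : (2:ℝ) - t ≠ 0 := by linarith
    field_simp
    ring
  have hM1 : 1 < M := by
    have := g_dec a t m 1 hat hm0 hm1 (le_of_lt ht1)
    rw [g_one] at this; rw [hMdef]; linarith
  have hMa : M < a := by
    nlinarith [hMval, mul_pos (mul_pos ht0 (by linarith : (0:ℝ) < 5 - 3 * t))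
      (by linarith : (0:ℝ) < t - 1)]
  have hgM1 : gmap a M < 1 := by
    rcases le_or_gt M t with h | h
    · have := g_dec a t 1 M hat one_pos hM1 h
      rw [g_one] at this; linarith
    · have := g_inc a t M a hat ht0 (le_of_lt h) hMa
      rw [g_self a (ne_of_gt ha0)] at this; linarith
  have hminx : ∀ x : ℝ, 0 < x → m ≤ gmap a x := by
    intro x hx
    have h := g_min a t x hat ht0 hx
    rw [hm]; linarith [hat]
  have hupper : ∀ x : ℝ, m ≤ x → x ≤ t → gmap a x ≤ M := by
    intro x hmx hxt
    rcases eq_or_lt_of_le hmx with he | hlt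
    · rw [← he]
    · have := g_dec a t m x hat hm0 hlt hxt
      rw [hMdef]; linarith
  have hinv : ∀ x : ℝ, m ≤ x → x ≤ M → gmap a x ≤ M := by
    intro x hmx hxM
    rcases le_or_gt x t with hxt | hxt
    · exact hupper x hmx hxt
    · rcases eq_or_lt_of_le hxM with he | hlt
      · rw [he]; linarith
      · have := g_inc a t x M hat ht0 (le_of_lt hxt) hlt
        linarith
  obtain ⟨l1, r1⟩ := m1
  obtain ⟨l2, r2⟩ := m2
  obtain ⟨l3, r3⟩ := m3
  have hx₁0 : 0 < x₁ := lt_of_lt_of_le hm0 l1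
  have hx₂0 : 0 < x₂ := lt_of_lt_of_le hm0 l2
  have hx₃0 : 0 < x₃ := lt_of_lt_of_le hm0 l3
  have hne21 : x₂ ≠ x₁ := by
    rcases ord with ⟨o1, o2⟩ | ⟨o1, o2⟩
    · exact (o1.trans o2).ne'
    · exact (o1.trans o2).ne
  -- fixed point cubic for x₁
  have hu₁0 : 0 < gmap a x₁ := lt_of_lt_of_le hm0 (hminx x₁ hx₁0)
  have hi1 : gmap a x₁ * x₁ = x₁ ^ 2 + a - a * x₁ :=
    g_mul a x₁ (gmap a x₁) (ne_of_gt hx₁0) rfl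
  have hii1 : (gmap a x₁) ^ 2 + a - (a + x₁) * (gmap a x₁) = 0 :=
    g_eq_quad a (gmap a x₁) x₁ (ne_of_gt hu₁0) e1
  have hcubic : (x₁ - 1) * (2 * x₁ ^ 2 - 2 * a * x₁ + a) = 0 := by
    have h9 : a * ((x₁ - 1) * (2 * x₁ ^ 2 - 2 * a * x₁ + a)) = 0 := by
      linear_combination (-(x₁ ^ 2)) * hii1 +
        (-((a + x₁) * x₁ - (x₁ ^ 2 + a - a * x₁) - (gmap a x₁) * x₁)) * hi1
    rcases mul_eq_zero.mp h9 with h | h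
    · exact absurd h (ne_of_gt ha0)
    · exact h
  have hx₁M : x₁ ≤ M := by
    rcases mul_eq_zero.mp hcubic with h | hq
    · have : x₁ = 1 := by linarith [sub_eq_zero.mp h]
      linarith
    · exact x1_le_M a t M x₁ hat ht1 ht2 hMval hq
  -- main split on x₂ vs M
  rcases le_or_gt x₂ M with hx₂M | hx₂M
  · -- CASE II : x₂ ≤ M
    set u₂ := gmap a x₂ with hu₂def
    have hu₂m : m ≤ u₂ := hminx x₂ hx₂0
    have hu₂M : u₂ ≤ M := hinv x₂ l2 hx₂M
    have hu₂0 : 0 < u₂ := lt_of_lt_of_le hm0 hu₂m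
    have hii2 : u₂ ^ 2 + a - (a + x₁) * u₂ = 0 :=
      g_eq_quad a u₂ x₁ (ne_of_gt hu₂0) e2
    have hi2 : u₂ * x₂ = x₂ ^ 2 + a - a * x₂ :=
      g_mul a x₂ u₂ (ne_of_gt hx₂0) hu₂def.symm
    rcases eq_or_ne x₁ 1 with hx₁1 | hx₁ne
    · -- x₁ = 1
      have hfa : (u₂ - 1) * (u₂ - a) = 0 := by
        rw [hx₁1] at hii2; linear_combination hii2
      have hu₂1 : u₂ = 1 := by
        rcases mul_eq_zero.mp hfa with h | h
        · linarith [sub_eq_zero.mp h]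
        · exfalso; have : u₂ = a := by linarith [sub_eq_zero.mp h]
          linarith
      have hfb : (x₂ - 1) * (x₂ - a) = 0 := by
        rw [hu₂1] at hi2; linear_combination -hi2
      rcases mul_eq_zero.mp hfb with h | h
      · exact hne21 (by rw [hx₁1]; linarith [sub_eq_zero.mp h])
      · have : x₂ = a := by linarith [sub_eq_zero.mp h]
        linarith
    · -- x₁ is a 2-cycle point
      have hqx : 2 * x₁ ^ 2 - 2 * a * x₁ + a = 0 := by
        rcases mul_eq_zero.mp hcubic with h | h
        · exact absurd (by linarith [sub_eq_zero.mp h] : x₁ = 1) hx₁ne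
        · exact h
      have hsq1 : (2 * x₁ - a) ^ 2 = a ^ 2 - 2 * a := by linear_combination 2 * hqx
      have hD : 0 ≤ a ^ 2 - 2 * a := hsq1 ▸ sq_nonneg _
      have ha2 : 2 < a := by
        have h2le : 2 ≤ a := two_le_a a ha1 hD
        rcases eq_or_lt_of_le h2le with he | h
        · exfalso
          have : (2 * x₁ - 2) ^ 2 = 0 := by rw [← he] at hsq1; linarith [hsq1]
          have := pow_eq_zero_iff (n := 2) (by norm_num) |>.mp this
          exact hx₁ne (by linarith)
        · exact h
      set d := Real.sqrt (a ^ 2 - 2 * a) with hddef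
      have hd0 : 0 ≤ d := Real.sqrt_nonneg _
      have hd2 : d ^ 2 = a ^ 2 - 2 * a := Real.sq_sqrt hD
      obtain ⟨hdpos, hda, hqm1', h2qm1⟩ := d_bounds a d ha2 hd0 hd2
      have hqm0 : (0:ℝ) < (a - d) / 2 := by linarith
      have hgqm : gmap a ((a - d) / 2) = (a + d) / 2 :=
        g_root a ((a - d) / 2) ((a + d) / 2) (ne_of_gt hqm0)
          (by linear_combination (1 / 2 : ℝ) * hd2)
      have hgqp : gmap a ((a + d) / 2) = (a - d) / 2 :=
        g_root a ((a + d) / 2) ((a - d) / 2) (by positivity)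
          (by linear_combination (1 / 2 : ℝ) * hd2)
      have hg2qm : gmap a (a - d) = (a - d) / 2 :=
        g_root a (a - d) ((a - d) / 2) (ne_of_gt (by linarith))
          (by linear_combination (1 / 2 : ℝ) * hd2)
      have hg2qp : gmap a (a + d) = (a + d) / 2 :=
        g_root a (a + d) ((a + d) / 2) (by positivity)
          (by linear_combination (1 / 2 : ℝ) * hd2)
      have hqm1 : (a - d) / 2 < 1 := hqm1'

      have hx₁cases : 2 * x₁ = a + d ∨ 2 * x₁ = a - d := by
        have hz : (2 * x₁ - a - d) * (2 * x₁ - a + d) = 0 := by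
          linear_combination hsq1 - hd2
        rcases mul_eq_zero.mp hz with h | h
        · left; linarith
        · right; linarith
      rcases hx₁cases with hx₁v | hx₁v
      · -- x₁ = (a+d)/2 = q⁺
        have hu₂fact : (u₂ - (a - d) / 2) * (u₂ - (a + d)) = 0 := by
          linear_combination hii2 + (u₂ / 2) * hx₁v - (1 / 2 : ℝ) * hd2
        have hu₂v : u₂ = (a - d) / 2 := by
          rcases mul_eq_zero.mp hu₂fact with h | h
          · linarith [sub_eq_zero.mp h]
          · exfalso; have : u₂ = a + d := by linarith [sub_eq_zero.mp h]
            linarith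
        have hx₂fact : (x₂ - (a + d) / 2) * (x₂ - (a - d)) = 0 := by
          linear_combination -hi2 + x₂ * hu₂v - (1 / 2 : ℝ) * hd2
        have hx₂v : x₂ = a - d := by
          rcases mul_eq_zero.mp hx₂fact with h | h
          · exfalso
            exact hne21 (by have := sub_eq_zero.mp h; linarith)
          · linarith [sub_eq_zero.mp h]
        rcases lt_trichotomy a (3 * d) with hTT | hTT | hTT
        · -- a < 3d : x₂ = a - d < (a+d)/2 = x₁
          obtain ⟨o1, o2⟩ : x₂ < x₃ ∧ x₃ < x₁ := by
            rcases ord with ⟨o1, o2⟩ | h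
            · exfalso; linarith [hx₁v, hx₂v]
            · exact h
          have hu₃lt : gmap a x₃ < (a - d) / 2 := by
            rcases le_or_gt x₃ t with h | h
            · have := g_dec a t x₂ x₃ hat hx₂0 o1 h
              rw [hx₂v, hg2qm] at this; linarith
            · have := g_inc a t x₃ x₁ hat ht0 (le_of_lt h) o2
              rw [show x₁ = (a + d) / 2 by linarith, hgqp] at this; linarith
          have hu₃0 : 0 < gmap a x₃ := lt_of_lt_of_le hm0 (hminx x₃ hx₃0)
          have := g_dec a t (gmap a x₃) ((a - d) / 2) hat hu₃0 hu₃lt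
            (by linarith : (a - d) / 2 ≤ t)
          rw [hgqm, e3, hx₂v] at this
          linarith
        · -- a = 3d : x₁ = x₂
          exact hne21 (by rw [hx₂v]; linarith)
        · -- a > 3d : x₁ = (a+d)/2 < a - d = x₂
          obtain ⟨o1, o2⟩ : x₁ < x₃ ∧ x₃ < x₂ := by
            rcases ord with h | ⟨o1, o2⟩
            · exact h
            · exfalso; linarith [hx₁v, hx₂v]
          have ht32 : t < 3 / 2 := t_lt_32 a t d hat ht0 hd0 hd2 hTT
          have hM2qm : M < a - d := auxM a t d M hat ht1 ht32 hd0 hd2 hMval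
          have hu₃lt : gmap a x₃ < (a - d) / 2 := by
            rcases le_or_gt x₃ t with h | h
            · have hqp0 : (0:ℝ) < (a + d) / 2 := by positivity
              have := g_dec a t ((a + d) / 2) x₃ hat hqp0
                (by linarith : (a + d) / 2 < x₃) h
              rw [hgqp] at this; linarith
            · have := g_inc a t x₃ (a - d) hat ht0 (le_of_lt h)
                (by linarith : x₃ < a - d)
              rw [hg2qm] at this; linarith
          have hu₃m : m ≤ gmap a x₃ := hminx x₃ hx₃0
          have hle : gmap a (gmap a x₃) ≤ M :=
            hupper (gmap a x₃) hu₃m (by linarith : gmap a x₃ ≤ t)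
          rw [e3, hx₂v] at hle
          linarith
      · -- x₁ = (a-d)/2 = q⁻
        have hx₁qm : x₁ = (a - d) / 2 := by linarith
        have hu₂fact : (u₂ - (a + d) / 2) * (u₂ - (a - d)) = 0 := by
          linear_combination hii2 + (u₂ / 2) * hx₁v - (1 / 2 : ℝ) * hd2
        rcases mul_eq_zero.mp hu₂fact with hu₂v | hu₂v
        · -- u₂ = q⁺ : then x₂ ∈ {q⁻, 2q⁺}
          have hu₂v' : u₂ = (a + d) / 2 := by linarith [sub_eq_zero.mp hu₂v]
          have hx₂fact : (x₂ - (a - d) / 2) * (x₂ - (a + d)) = 0 := by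
            linear_combination -hi2 + x₂ * hu₂v' - (1 / 2 : ℝ) * hd2
          rcases mul_eq_zero.mp hx₂fact with h | h
          · exact hne21 (by rw [hx₁qm]; linarith [sub_eq_zero.mp h])
          · have : x₂ = a + d := by linarith [sub_eq_zero.mp h]
            linarith
        · -- u₂ = a - d = 2q⁻
          have hu₂v' : u₂ = a - d := by linarith [sub_eq_zero.mp hu₂v]
          rcases lt_or_ge M (a - d) with hMlt | hMge
          · linarith
          · -- a - d ≤ M forces t ≥ 3/2
            have ht32 : 3 / 2 ≤ t := by
              by_contra hc
              push_neg at hc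
              have := auxM a t d M hat ht1 hc hd0 hd2 hMval
              linarith
            obtain ⟨h2qmle, hqpge, hMt, h2qmqp⟩ :=
              t_ge_32_facts a t d M hat ht1 ht2 ht32 hd0 hd2 hMval
            rcases le_or_gt x₂ t with hx2t | hx2t
            · -- x₂ ≤ t
              have hx₂ge : (a - d) / 2 ≤ x₂ := by
                by_contra h
                push_neg at h
                have := g_dec a t x₂ ((a - d) / 2) hat hx₂0 h (by linarith)
                rw [hgqm, ← hu₂def, hu₂v'] at this
                linarith
              have hx₂gt : (a - d) / 2 < x₂ :=
                lt_of_le_of_ne hx₂ge (fun h => hne21 (by rw [hx₁qm, ← h]))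
              obtain ⟨o1, o2⟩ : x₁ < x₃ ∧ x₃ < x₂ := by
                rcases ord with h | ⟨o1, o2⟩
                · exact h
                · exfalso; rw [hx₁qm] at o2; linarith
              have hu₃gt : a - d < gmap a x₃ := by
                have := g_dec a t x₃ x₂ hat hx₃0 o2 hx2t
                rw [← hu₂def, hu₂v'] at this; linarith
              have hu₃lt : gmap a x₃ < (a + d) / 2 := by
                have := g_dec a t x₁ x₃ hat hx₁0 o1 (by linarith)
                rw [show gmap a x₁ = (a + d) / 2 by rw [hx₁qm]; exact hgqm] at this
                linarith
              have hggx₃ : gmap a (gmap a x₃) < (a - d) / 2 := by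
                rcases le_or_gt (gmap a x₃) t with h | h
                · have := g_dec a t (a - d) (gmap a x₃) hat (by linarith) hu₃gt h
                  rw [hg2qm] at this; linarith
                · have := g_inc a t (gmap a x₃) ((a + d) / 2) hat ht0 (le_of_lt h) hu₃lt
                  rw [hgqp] at this; linarith
              rw [e3] at hggx₃
              linarith
            · -- t < x₂ ≤ M
              rcases eq_or_lt_of_le hx₂M with he | hlt
              · rw [he] at hu₂def
                rw [← hu₂def] at hgM1
                linarith
              · have := g_inc a t x₂ M hat ht0 (le_of_lt hx2t) hlt
                rw [← hu₂def, hu₂v'] at this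
                linarith
  · -- CASE I : M < x₂
    obtain ⟨o1, o2⟩ : x₁ < x₃ ∧ x₃ < x₂ := by
      rcases ord with h | ⟨o1, o2⟩
      · exact h
      · exfalso; linarith
    have hgx₃t : t < gmap a x₃ := by
      by_contra hle
      push_neg at hle
      have h1 : gmap a (gmap a x₃) ≤ M := hupper (gmap a x₃) (hminx x₃ hx₃0) hle
      rw [e3] at h1; linarith
    rcases le_or_gt t x₃ with hc1 | hc1
    · have hg32 : gmap a x₃ < gmap a x₂ := g_inc a t x₃ x₂ hat ht0 hc1 o2
      have h := g_inc a t (gmap a x₃) (gmap a x₂) hat ht0 (le_of_lt hgx₃t) hg32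
      rw [e3, e2] at h
      linarith
    · have hgle : gmap a x₃ ≤ M := hupper x₃ l3 (le_of_lt hc1)
      have hggle : gmap a (gmap a x₃) ≤ gmap a M := by
        rcases eq_or_lt_of_le hgle with he | hlt
        · rw [he]
        · exact le_of_lt (g_inc a t (gmap a x₃) M hat ht0 (le_of_lt hgx₃t) hlt)
      rw [e3] at hggle
      linarith [hgM1]

set_option maxHeartbeats 1000000 in
/-- Under `β/(8(1−α)²) < λ < β/(2(1−α)²)`, the second iterate of
the restriction of `f` to `E = [f(s), f²(s)+s]` is turbulent iff
`25β/(72(1−α)²) ≤ λ`. Turbulence of `h` on an interval `I`: there exist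
`x₁, x₂, x₃ ∈ I` with `h(x₂) = h(x₁) = x₁`, `h(x₃) = x₂`, and either
`x₁ < x₃ < x₂` or `x₂ < x₃ < x₁`. -/
theorem stmt_5 (α β lam : ℝ) (hα : α ∈ Set.Ioo (0:ℝ) 1) (hβ : β ∈ Set.Ioo (0:ℝ) 1)
    (hlam : 0 < lam)
    (f : ℝ → ℝ) (hf : ∀ p : ℝ, f p = p + lam * (2 * β / p - 4 * (1 - α)))
    (s : ℝ) (hs : s = Real.sqrt (2 * lam * β))
    (h1 : β / (8 * (1 - α) ^ 2) < lam) (h2 : lam < β / (2 * (1 - α) ^ 2)) :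
    (∃ x₁ ∈ Set.Icc (f s) (f (f s) + s), ∃ x₂ ∈ Set.Icc (f s) (f (f s) + s),
        ∃ x₃ ∈ Set.Icc (f s) (f (f s) + s),
        f^[2] x₂ = x₁ ∧ f^[2] x₁ = x₁ ∧ f^[2] x₃ = x₂ ∧
        ((x₁ < x₃ ∧ x₃ < x₂) ∨ (x₂ < x₃ ∧ x₃ < x₁))) ↔
      25 * β / (72 * (1 - α) ^ 2) ≤ lam := by
  obtain ⟨hα0, hα1⟩ := hα
  obtain ⟨hβ0, hβ1⟩ := hβ
  set c : ℝ := 1 - α with hc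
  have hc0 : 0 < c := by simp [hc]; linarith
  set P : ℝ := β / (2 * c) with hP
  have hP0 : 0 < P := by positivity
  set T : ℝ := s / P with hT
  have hs0 : 0 ≤ s := by rw [hs]; exact Real.sqrt_nonneg _
  have hT0 : 0 ≤ T := by positivity
  set A : ℝ := T ^ 2 with hA
  have hsq : s ^ 2 = 2 * lam * β := by
    rw [hs]; rw [sq]; exact Real.mul_self_sqrt (by positivity)
  have hAval : A = 8 * lam * c ^ 2 / β := by
    rw [hA, hT, div_pow, hsq, hP]
    field_simp; ring
  have hA1 : 1 < A := by
    rw [hAval, lt_div_iff₀ hβ0]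
    rw [div_lt_iff₀ (by positivity)] at h1
    linarith
  have hA4 : A < 4 := by
    rw [hAval, div_lt_iff₀ hβ0]
    rw [lt_div_iff₀ (by positivity)] at h2
    linarith
  have hT1 : 1 < T := by nlinarith
  have hT2 : T < 2 := by nlinarith
  -- bridge: f x = P * gmap A (x / P)
  have hbridge : ∀ x : ℝ, f x = P * gmap A (x / P) := by
    intro x
    rcases eq_or_ne x 0 with rfl | hx
    · rw [hf, gmap]
      simp only [zero_div, div_zero]
      have : P * (0 + 0 - A) = -(P * A) := by ring
      rw [this]
      have hPA : P * A = 4 * lam * c := by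
        rw [hP, hAval]; field_simp; ring
      rw [hPA]; simp [hc]; ring
    · rw [hf, gmap]
      have hAP2 : A * P ^ 2 = 2 * lam * β := by
        rw [hAval, hP]; field_simp; ring
      have hPA : A * P = 4 * lam * c := by
        rw [hAval, hP]; field_simp; ring
      have hPne : P ≠ 0 := ne_of_gt hP0
      have e : ∀ P' A' : ℝ, P' ≠ 0 →
          P' * (x / P' + A' / (x / P') - A') = x + A' * P' ^ 2 / x - A' * P' := by
        intro P' A' h; field_simp
      rw [e P A hPne, hAP2, hPA]; ring
  have hfP : ∀ x : ℝ, f x / P = gmap A (x / P) := by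
    intro x; rw [hbridge]; field_simp
  have hsP : s / P = T := rfl
  have hfs : f s = P * gmap A T := by rw [hbridge, hsP]
  have hffs : f (f s) + s = P * (gmap A (gmap A T) + T) := by
    rw [hbridge (f s)]
    have : f s / P = gmap A T := by rw [hfP, hsP]
    rw [this]
    have : s = P * T := by rw [hT]; field_simp
    rw [this]; ring
  have hiter : ∀ x : ℝ, f^[2] x = P * gmap A (gmap A (x / P)) := by
    intro x
    have : f^[2] x = f (f x) := by
      rw [Function.iterate_succ, Function.iterate_one]; rfl
    rw [this, hbridge (f x)]
    have : f x / P = gmap A (x / P) := hfP x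
    rw [this]
  have hmem : ∀ x : ℝ, x ∈ Set.Icc (f s) (f (f s) + s) ↔
      x / P ∈ Set.Icc (gmap A T) (gmap A (gmap A T) + T) := by
    intro x
    rw [hffs, hfs, Set.mem_Icc, Set.mem_Icc, le_div_iff₀ hP0, div_le_iff₀ hP0]
    constructor
    · rintro ⟨u, v⟩; constructor <;> linarith
    · rintro ⟨u, v⟩; constructor <;> linarith
  have hABeta : A * β = 8 * lam * c ^ 2 := by
    rw [hAval]; field_simp
  have hthr : 25 * β / (72 * c ^ 2) ≤ lam ↔ 5 / 3 ≤ T := by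
    rw [div_le_iff₀ (by positivity)]
    constructor
    · intro h
      have h9 : 25 ≤ 9 * A := by
        by_contra hno
        push_neg at hno
        have hpos : (0:ℝ) < (25 - 9 * A) * β := mul_pos (by linarith) hβ0
        nlinarith [hABeta, hpos, h]
      by_contra hno
      push_neg at hno
      have hTT := mul_self_lt_mul_self hT0 hno
      rw [hA] at h9
      nlinarith [hTT, h9]
    · intro h
      have hsq' : 25 / 9 ≤ T * T := by
        have := mul_self_le_mul_self (by norm_num : (0:ℝ) ≤ 5 / 3) h
        linarith
      have h9 : 25 ≤ 9 * A := by rw [hA, pow_two]; linarith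
      have hnn : (0:ℝ) ≤ (9 * A - 25) * β := mul_nonneg (by linarith) hβ0.le
      nlinarith [hABeta, hnn]
  rw [hc] at hthr
  rw [hthr]
  constructor
  · rintro ⟨x₁, m1, x₂, m2, x₃, m3, e2, e1, e3, ord⟩
    by_contra hlt
    push_neg at hlt
    refine rev A T rfl hT1 hlt (x₁ / P) (x₂ / P) (x₃ / P)
      ((hmem x₁).1 m1) ((hmem x₂).1 m2) ((hmem x₃).1 m3) ?_ ?_ ?_ ?_
    · have := hiter x₂; rw [e2] at this
      field_simp [ne_of_gt hP0] at this ⊢; linarith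
    · have := hiter x₁; rw [e1] at this
      field_simp [ne_of_gt hP0] at this ⊢; linarith
    · have := hiter x₃; rw [e3] at this
      field_simp [ne_of_gt hP0] at this ⊢; linarith
    · have dv : ∀ u v : ℝ, u < v → u / P < v / P := fun u v huv => by
        rw [div_lt_div_iff₀ hP0 hP0]; nlinarith
      rcases ord with ⟨u, v⟩ | ⟨u, v⟩
      · exact Or.inl ⟨dv _ _ u, dv _ _ v⟩
      · exact Or.inr ⟨dv _ _ u, dv _ _ v⟩
  · intro h53
    obtain ⟨y₁, m1, y₂, m2, y₃, m3, e2, e1, e3, ord⟩ := fwd A T rfl h53 hT2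
    refine ⟨P * y₁, ?_, P * y₂, ?_, P * y₃, ?_, ?_, ?_, ?_, ?_⟩
    · rw [hmem]; simpa [mul_div_cancel_left₀ _ (ne_of_gt hP0)] using m1
    · rw [hmem]; simpa [mul_div_cancel_left₀ _ (ne_of_gt hP0)] using m2
    · rw [hmem]; simpa [mul_div_cancel_left₀ _ (ne_of_gt hP0)] using m3
    · rw [hiter]; rw [mul_div_cancel_left₀ _ (ne_of_gt hP0), e2]
    · rw [hiter]; rw [mul_div_cancel_left₀ _ (ne_of_gt hP0), e1]
    · rw [hiter]; rw [mul_div_cancel_left₀ _ (ne_of_gt hP0), e3]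
    · rcases ord with ⟨u, v⟩ | ⟨u, v⟩
      · exact Or.inl ⟨by nlinarith, by nlinarith⟩
      · exact Or.inr ⟨by nlinarith, by nlinarith⟩
end

section
/- Let α, β ∈ (0,1), λ > 0, and f(p) = p + λ(2β/p − 4(1−α)). If λ ≥ β/(4(1−α)²), then for p > 0 one has f²(p) = p if and only if p equals one of the three values β/(2(1−α)), 2λ(1−α) − √(4λ²(1−α)² − λβ), or 2λ(1−α) + √(4λ²(1−α)² − λβ). -/
/-- If `λ ≥ β/(4(1−α)²)`, then for `p > 0`, `f²(p) = p` iff `p`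
is one of `β/(2(1−α))`, `2λ(1−α) − √(4λ²(1−α)² − λβ)`, or
`2λ(1−α) + √(4λ²(1−α)² − λβ)`. -/
theorem stmt_11 (α β lam : ℝ) (hα : α ∈ Set.Ioo (0:ℝ) 1) (hβ : β ∈ Set.Ioo (0:ℝ) 1)
    (hlam : 0 < lam)
    (f : ℝ → ℝ) (hf : ∀ p : ℝ, f p = p + lam * (2 * β / p - 4 * (1 - α)))
    (h1 : β / (4 * (1 - α) ^ 2) ≤ lam) :
    ∀ p : ℝ, 0 < p →
      (f (f p) = p ↔
        p = β / (2 * (1 - α)) ∨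
        p = 2 * lam * (1 - α) - Real.sqrt (4 * lam ^ 2 * (1 - α) ^ 2 - lam * β) ∨
        p = 2 * lam * (1 - α) + Real.sqrt (4 * lam ^ 2 * (1 - α) ^ 2 - lam * β)) := by
  obtain ⟨hα0, hα1⟩ := hα
  obtain ⟨hβ0, hβ1⟩ := hβ
  have ha : 0 < 1 - α := by linarith
  set s := Real.sqrt (4 * lam ^ 2 * (1 - α) ^ 2 - lam * β) with hs
  have hdisc : 0 ≤ 4 * lam ^ 2 * (1 - α) ^ 2 - lam * β := by
    have h2 : β ≤ lam * (4 * (1 - α) ^ 2) := by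
      rw [div_le_iff₀ (by positivity)] at h1; linarith
    nlinarith
  have hs2 : s ^ 2 = 4 * lam ^ 2 * (1 - α) ^ 2 - lam * β := Real.sq_sqrt hdisc
  intro p hp
  have hp0 : p ≠ 0 := hp.ne'
  set Q := p ^ 2 - 4 * lam * (1 - α) * p + 2 * lam * β with hQdef
  have hq : f p = Q / p := by rw [hf]; field_simp [hQdef]; ring
  have key : f (f p) = p ↔ (2 * (1 - α) * p - β) * (p ^ 2 - 4 * lam * (1 - α) * p + lam * β) = 0 := by
    rcases eq_or_ne Q 0 with hQ | hQ
    · constructor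
      · intro h
        rw [hq, hQ, zero_div, hf 0] at h
        simp at h
        nlinarith
      · intro h
        exfalso
        rw [hQdef] at hQ
        rcases mul_eq_zero.mp h with h2 | h2
        · nlinarith
        · nlinarith
    · rw [hq, hf]
      rw [hQdef] at hQ ⊢
      have hQ' : p * (p - 4 * lam * (1 - α)) + lam * 2 * β ≠ 0 := by
        intro h0; apply hQ; linear_combination h0
      constructor
      · intro h
        field_simp at h
        have h4 : (-4 * lam) * ((2 * (1 - α) * p - β) * (p ^ 2 - 4 * lam * (1 - α) * p + lam * β)) = 0 := by
          linear_combination h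
        rcases mul_eq_zero.mp h4 with h5 | h5
        · exact absurd h5 (by positivity)
        · exact h5
      · intro h
        field_simp
        linear_combination (-4 * lam) * h
  rw [key]
  have hfac : (p ^ 2 - 4 * lam * (1 - α) * p + lam * β) =
      (p - (2 * lam * (1 - α) - s)) * (p - (2 * lam * (1 - α) + s)) := by
    ring_nf
    nlinarith [hs2]
  rw [hfac, mul_eq_zero, mul_eq_zero]
  constructor
  · rintro (h | h | h)
    · left; rw [eq_div_iff (by positivity)]; linarith
    · right; left; linarith [sub_eq_zero.mp h]
    · right; right; linarith [sub_eq_zero.mp h]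
  · rintro (h | h | h)
    · left; rw [eq_div_iff (by positivity)] at h; linarith
    · right; left; rw [sub_eq_zero]; linarith
    · right; right; rw [sub_eq_zero]; linarith
end

section
/- Let α, β ∈ (0,1) and λ ≥ β/(4(1−α)²). Then √(2λβ) < 2λ(1−α) + √(4λ²(1−α)² − λβ) if and only if λ > 9β/(32(1−α)²). -/
set_option maxHeartbeats 1600000 in
/-- For `α, β ∈ (0,1)` and `λ ≥ β/(4(1−α)²)`,
`√(2λβ) < 2λ(1−α) + √(4λ²(1−α)² − λβ)` iff `λ > 9β/(32(1−α)²)`. -/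
theorem stmt_12 (α β lam : ℝ) (hα : α ∈ Set.Ioo (0:ℝ) 1) (hβ : β ∈ Set.Ioo (0:ℝ) 1)
    (h1 : β / (4 * (1 - α) ^ 2) ≤ lam) :
    Real.sqrt (2 * lam * β) <
        2 * lam * (1 - α) + Real.sqrt (4 * lam ^ 2 * (1 - α) ^ 2 - lam * β) ↔
      9 * β / (32 * (1 - α) ^ 2) < lam := by
  obtain ⟨hα0, hα1⟩ := hα
  obtain ⟨hβ0, hβ1⟩ := hβ
  have ha : 0 < 1 - α := by linarith
  have hlam : 0 < lam := lt_of_lt_of_le (by positivity) h1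
  have h1' : β ≤ lam * (4 * (1 - α) ^ 2) := (div_le_iff₀ (by positivity)).mp h1
  have hd : 0 ≤ 4 * lam ^ 2 * (1 - α) ^ 2 - lam * β := by nlinarith
  set s1 := Real.sqrt (2 * lam * β) with hs1
  set s2 := Real.sqrt (4 * lam ^ 2 * (1 - α) ^ 2 - lam * β) with hs2
  have hs1sq : s1 ^ 2 = 2 * lam * β := Real.sq_sqrt (by positivity)
  have hs2sq : s2 ^ 2 = 4 * lam ^ 2 * (1 - α) ^ 2 - lam * β := Real.sq_sqrt hd
  have hs1n : 0 ≤ s1 := Real.sqrt_nonneg _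
  have hs2n : 0 ≤ s2 := Real.sqrt_nonneg _
  have hA : 0 < 2 * lam * (1 - α) := by positivity
  constructor
  · intro h
    rw [div_lt_iff₀ (by positivity)]
    have hsq : s1 ^ 2 < (2 * lam * (1 - α) + s2) ^ 2 := by
      have := add_pos_of_pos_of_nonneg hA hs2n
      nlinarith
    -- from hsq : 4λa·s2 > 3λβ − 8λ²a², derive 3 s2 > 2 λ a, then conclude
    have h3 : 3 * s2 > 2 * lam * (1 - α) := by nlinarith [mul_nonneg hs2n hA.le]
    have : 9 * s2 ^ 2 > (2 * lam * (1 - α)) ^ 2 := by nlinarith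
    nlinarith
  · intro h
    have h' : 9 * β < lam * (32 * (1 - α) ^ 2) := (div_lt_iff₀ (by positivity)).mp h
    have h8 : 9 * (lam * β) < 8 * (2 * lam * (1 - α)) ^ 2 := by nlinarith
    have ht : 0 < lam * β := mul_pos hlam hβ0
    have hs2pos : 0 < s2 := Real.sqrt_pos.mpr (by nlinarith)
    have key0 : 2 * (2 * lam * (1 - α)) * s2 > 3 * (lam * β) - 2 * (2 * lam * (1 - α)) ^ 2 := by
      rcases le_or_gt (3 * (lam * β)) (2 * (2 * lam * (1 - α)) ^ 2) with hc | hc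
      · nlinarith [mul_pos hA hs2pos]
      · have hgap : (0:ℝ) < 8 * (2 * lam * (1 - α)) ^ 2 - 9 * (lam * β) := by linarith
        have hx2 : (2 * (2 * lam * (1 - α)) * s2) ^ 2
            = 4 * (2 * lam * (1 - α)) ^ 2 * (4 * lam ^ 2 * (1 - α) ^ 2 - lam * β) := by
          rw [show (2 * (2 * lam * (1 - α)) * s2) ^ 2
              = 4 * (2 * lam * (1 - α)) ^ 2 * s2 ^ 2 by ring, hs2sq]
        have hxy : (3 * (lam * β) - 2 * (2 * lam * (1 - α)) ^ 2) ^ 2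
            < (2 * (2 * lam * (1 - α)) * s2) ^ 2 := by
          rw [hx2]; nlinarith [mul_pos ht hgap]
        have := lt_of_pow_lt_pow_left₀ 2 (by positivity) hxy
        linarith
    have key : s1 ^ 2 < (2 * lam * (1 - α) + s2) ^ 2 := by
      rw [show (2 * lam * (1 - α) + s2) ^ 2
          = (2 * lam * (1 - α)) ^ 2 + 2 * (2 * lam * (1 - α)) * s2 + s2 ^ 2 by ring,
        hs2sq, hs1sq]
      nlinarith [key0]
    have hfin := lt_of_pow_lt_pow_left₀ 2 (by positivity) key
    linarith
end

section
/- Let α, β ∈ (0,1), λ > 0, f(p) = p + λ(2β/p − 4(1−α)), s = √(2λβ), and E = [f(s), f²(s) + s]. If 9β/(32(1−α)²) < λ < β/(2(1−α)²), then the set Π = {x ∈ [f(s), s] : f(x) ∈ [f(s), s] and f²(x) = x} is the singleton {β/(2(1−α))}. -/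
/-- If `9β/(32(1−α)²) < λ < β/(2(1−α)²)`, then
`Π = {x ∈ [f(s), s] : f(x) ∈ [f(s), s] ∧ f²(x) = x}` is the singleton
`{β/(2(1−α))}`. -/
theorem stmt_13 (α β lam : ℝ) (hα : α ∈ Set.Ioo (0:ℝ) 1) (hβ : β ∈ Set.Ioo (0:ℝ) 1)
    (hlam : 0 < lam)
    (f : ℝ → ℝ) (hf : ∀ p : ℝ, f p = p + lam * (2 * β / p - 4 * (1 - α)))
    (s : ℝ) (hs : s = Real.sqrt (2 * lam * β))
    (h1 : 9 * β / (32 * (1 - α) ^ 2) < lam) (h2 : lam < β / (2 * (1 - α) ^ 2)) :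
    {x : ℝ | x ∈ Set.Icc (f s) s ∧ f x ∈ Set.Icc (f s) s ∧ f (f x) = x} =
      {β / (2 * (1 - α))} := by
  set c : ℝ := 1 - α with hcdef
  have hc : 0 < c := by simp only [hcdef]; linarith [hα.2]
  have hβ0 : 0 < β := hβ.1
  have hs0 : 0 < s := by
    rw [hs]; exact Real.sqrt_pos.mpr (by positivity)
  have hs2 : s ^ 2 = 2 * lam * β := by
    rw [hs]; exact Real.sq_sqrt (by positivity)
  have h1' : 9 * β < 32 * lam * c ^ 2 := by
    rw [div_lt_iff₀ (by positivity)] at h1; nlinarith [h1]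
  have h2' : 2 * lam * c ^ 2 < β := by
    rw [lt_div_iff₀ (by positivity)] at h2; nlinarith [h2]
  -- 4cs > 3β
  have hcs : 3 * β < 4 * c * s := by
    nlinarith [hs2, h1', mul_pos hc hs0, hβ0, mul_pos hβ0 hβ0]
  -- s > 2λc
  have hslc : 2 * lam * c < s := by
    nlinarith [hs2, mul_pos hlam (show (0:ℝ) < β - 2 * lam * c ^ 2 by linarith),
      hs0, mul_pos hlam hc]
  have hsne : s ≠ 0 := ne_of_gt hs0
  have hfs : f s = 2 * s - 4 * lam * c := by
    rw [hf]
    have h2b : lam * (2 * β / s) = s := by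
      rw [mul_div_assoc'] ; rw [div_eq_iff hsne]; nlinarith [hs2]
    have : lam * (2 * β / s - 4 * c) = lam * (2 * β / s) - lam * (4 * c) := by ring
    rw [this, h2b]; ring
  have hfs_pos : 0 < f s := by rw [hfs]; linarith
  ext x
  simp only [Set.mem_setOf_eq, Set.mem_singleton_iff, Set.mem_Icc]
  constructor
  · rintro ⟨⟨hx1, hx2⟩, ⟨hy1, hy2⟩, hper⟩
    set y : ℝ := f x with hydef
    have hx0 : 0 < x := lt_of_lt_of_le hfs_pos hx1
    have hy0 : 0 < y := lt_of_lt_of_le hfs_pos hy1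
    have hyx : y = x + lam * (2 * β / x - 4 * c) := hf x
    have hxy' : x = y + lam * (2 * β / y - 4 * c) := by
      rw [← hper]; exact hf y
    have e1 : x * y = x ^ 2 + lam * (2 * β - 4 * c * x) := by
      rw [hyx]; field_simp
    have e2 : y * x = y ^ 2 + lam * (2 * β - 4 * c * y) := by
      rw [hxy']; field_simp
    have key : (x - y) * (x + y - 4 * lam * c) = 0 := by linear_combination e2 - e1
    rcases mul_eq_zero.mp key with h | h
    · -- fixed point case
      have h' : y = x := by linarith
      have h0 : lam * (2 * β - 4 * c * x) = 0 := by linear_combination x * h' - e1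
      have h0' : 2 * β - 4 * c * x = 0 := (mul_eq_zero.mp h0).resolve_left hlam.ne'
      rw [eq_div_iff (by positivity : (2 : ℝ) * c ≠ 0)]
      linarith
    · -- genuine 2-cycle: contradiction
      exfalso
      have hxy : x * y = lam * β := by linear_combination e1 / 2 + (x / 2) * h
      have hprod : (s - x) * (s - y) = lam * (3 * β - 4 * c * s) := by
        linear_combination hs2 - s * h + hxy
      have h4 : lam * (3 * β - 4 * c * s) < 0 :=
        mul_neg_of_pos_of_neg hlam (by linarith)
      have h5 : 0 ≤ (s - x) * (s - y) :=
        mul_nonneg (by linarith) (by linarith)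
      linarith [hprod ▸ h5]
  · rintro rfl
    set p : ℝ := β / (2 * c) with hpdef
    have hp0 : 0 < p := by positivity
    have hfp : f p = p := by
      rw [hf]
      have hpne : p ≠ 0 := ne_of_gt hp0
      have : 2 * β / p - 4 * c = 0 := by
        rw [hpdef]; field_simp; ring
      rw [this]; ring
    have hps : p ≤ s := by
      rw [hpdef, div_le_iff₀ (by positivity)]; nlinarith [hcs]
    have hfsp : f s ≤ p := by
      rw [hfs, hpdef, le_div_iff₀ (by positivity)]
      nlinarith [sq_nonneg (8 * lam * c ^ 2 - β), hs2, mul_pos hc hs0, hβ0, hlam, hc]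
    exact ⟨⟨hfsp, hps⟩, by rw [hfp]; exact ⟨hfsp, hps⟩, by rw [hfp, hfp]⟩
end

section
/- Let α, β ∈ (0,1), λ > 0, f(p) = p + λ(2β/p − 4(1−α)), s = √(2λβ), and z = β/(2(1−α)). Assume λ < β/(2(1−α)²) (so that f(s) > 0). Then f²(s) − z > 0 if and only if λ > β/(8(1−α)²). -/
/-- With `z = β/(2(1−α))`, assuming `λ < β/(2(1−α)²)` (so
`f(s) > 0`), one has `f²(s) − z > 0` iff `λ > β/(8(1−α)²)`. -/
theorem stmt_16 (α β lam : ℝ) (hα : α ∈ Set.Ioo (0:ℝ) 1) (hβ : β ∈ Set.Ioo (0:ℝ) 1)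
    (hlam : 0 < lam)
    (f : ℝ → ℝ) (hf : ∀ p : ℝ, f p = p + lam * (2 * β / p - 4 * (1 - α)))
    (s : ℝ) (hs : s = Real.sqrt (2 * lam * β))
    (z : ℝ) (hz : z = β / (2 * (1 - α)))
    (h2 : lam < β / (2 * (1 - α) ^ 2)) :
    0 < f (f s) - z ↔ β / (8 * (1 - α) ^ 2) < lam := by
  obtain ⟨hα0, hα1⟩ := hα
  obtain ⟨hβ0, hβ1⟩ := hβ
  set a : ℝ := 1 - α with ha_def
  have ha : 0 < a := by simp only [ha_def]; linarith
  have h2β : 0 < 2 * lam * β := by positivity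
  have hspos : 0 < s := hs ▸ Real.sqrt_pos.mpr h2β
  have hs2 : s ^ 2 = 2 * lam * β := by
    rw [hs, Real.sq_sqrt h2β.le]
  have hβa : 2 * lam * a ^ 2 < β := by
    rw [lt_div_iff₀ (by positivity)] at h2; nlinarith
  have hs_gt : 2 * lam * a < s := by
    have hsq : (2 * lam * a) ^ 2 < s ^ 2 := by rw [hs2]; nlinarith
    exact lt_of_pow_lt_pow_left₀ 2 hspos.le hsq
  have hfs : f s = 2 * s - 4 * lam * a := by
    rw [hf]
    field_simp
    linear_combination -hs2
  have hq : 0 < f s := by rw [hfs]; linarith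
  have hβeq : β = s ^ 2 / (2 * lam) := by
    rw [hs2]; field_simp
  have hqne : 2 * s - 4 * lam * a ≠ 0 := by
    have : 0 < 2 * s - 4 * lam * a := by linarith
    exact this.ne'
  have key : (f (f s) - z) * (2 * a * f s * lam) = (4 * lam * a - s) ^ 3 := by
    rw [hf (f s), hfs, hz, hβeq]
    field_simp [hqne, hlam.ne', ha.ne']
    ring
  have hmul : 0 < 2 * a * f s * lam := by positivity
  have hiff1 : 0 < f (f s) - z ↔ 0 < (4 * lam * a - s) ^ 3 := by
    constructor
    · intro h; rw [← key]; exact mul_pos h hmul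
    · intro h
      by_contra hle
      push_neg at hle
      nlinarith [key, hmul, hle, h]
  have hiff2 : (0 : ℝ) < (4 * lam * a - s) ^ 3 ↔ 0 < 4 * lam * a - s :=
    Odd.pow_pos_iff (by decide)
  rw [hiff1, hiff2]
  constructor
  · intro h
    have hsq : s ^ 2 < (4 * lam * a) ^ 2 :=
      pow_lt_pow_left₀ (by linarith) hspos.le (by norm_num)
    rw [hs2] at hsq
    rw [div_lt_iff₀ (by positivity)]
    nlinarith
  · intro h
    rw [div_lt_iff₀ (by positivity)] at h
    have hsq : s ^ 2 < (4 * lam * a) ^ 2 := by rw [hs2]; nlinarith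
    have := lt_of_pow_lt_pow_left₀ 2 (by positivity : (0:ℝ) ≤ 4 * lam * a) hsq
    linarith
end

section
/- Let α, β ∈ (0,1), λ > 0, f(p) = p + λ(2β/p − 4(1−α)), s = √(2λβ), and z = β/(2(1−α)). Assume β/(8(1−α)²) < λ < β/(2(1−α)²) (so that f²(s) > 0). Then 1 − 2βλ/(z·f²(s)) > 0 if and only if λ > 25β/(72(1−α)²). -/
set_option maxHeartbeats 1600000 in
/-- With `z = β/(2(1−α))`, assuming
`β/(8(1−α)²) < λ < β/(2(1−α)²)` (so `f²(s) > 0`), one has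
`1 − 2βλ/(z·f²(s)) > 0` iff `λ > 25β/(72(1−α)²)`. -/
theorem stmt_17 (α β lam : ℝ) (hα : α ∈ Set.Ioo (0:ℝ) 1) (hβ : β ∈ Set.Ioo (0:ℝ) 1)
    (hlam : 0 < lam)
    (f : ℝ → ℝ) (hf : ∀ p : ℝ, f p = p + lam * (2 * β / p - 4 * (1 - α)))
    (s : ℝ) (hs : s = Real.sqrt (2 * lam * β))
    (z : ℝ) (hz : z = β / (2 * (1 - α)))
    (h1 : β / (8 * (1 - α) ^ 2) < lam) (h2 : lam < β / (2 * (1 - α) ^ 2)) :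
    0 < 1 - 2 * β * lam / (z * f (f s)) ↔ 25 * β / (72 * (1 - α) ^ 2) < lam := by
  obtain ⟨hα0, hα1⟩ := hα
  obtain ⟨hβ0, hβ1⟩ := hβ
  subst hs hz
  set a : ℝ := 1 - α with ha'
  have ha : 0 < a := by simp only [ha']; linarith
  set s : ℝ := Real.sqrt (2 * lam * β) with hsdef
  have hs2 : s ^ 2 = 2 * lam * β := Real.sq_sqrt (by positivity)
  have hspos : 0 < s := Real.sqrt_pos.2 (by positivity)
  rw [div_lt_iff₀ (by positivity : (0:ℝ) < 8 * a ^ 2)] at h1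
  rw [lt_div_iff₀ (by positivity : (0:ℝ) < 2 * a ^ 2)] at h2
  -- s between 2*lam*a and 4*lam*a
  have hu : 2 * lam * a < s := by nlinarith [mul_pos hlam ha]
  have hs4 : s < 4 * lam * a := by nlinarith [mul_pos hlam ha]
  have hu0 : 0 < 2 * s - 4 * lam * a := by linarith
  have hfs : f s = 2 * s - 4 * lam * a := by
    rw [hf]
    have hsne : s ≠ 0 := ne_of_gt hspos
    field_simp
    nlinarith [hs2]
  have hE : f (f s) * (2 * s - 4 * lam * a) =
      5 * s ^ 2 - 24 * lam * a * s + 32 * lam ^ 2 * a ^ 2 := by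
    rw [hfs, hf]
    have : (2 * s - 4 * lam * a) ≠ 0 := ne_of_gt hu0
    field_simp
    nlinarith [hs2]
  have hEpos : 0 < f (f s) := by
    nlinarith [sq_nonneg (5 * s - 12 * lam * a), mul_pos hlam ha, hu0, hE]
  rw [sub_pos, div_lt_one (mul_pos (by positivity) hEpos),
    div_mul_eq_mul_div, lt_div_iff₀ (by positivity : (0:ℝ) < 2 * a),
    div_lt_iff₀ (by positivity : (0:ℝ) < 72 * a ^ 2)]
  constructor
  · intro h
    have hE4 : 4 * lam * a < f (f s) := by nlinarith [hβ0]
    have h5 : 5 * s < 12 * lam * a := by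
      nlinarith [mul_pos (sub_pos.mpr hE4) hu0, hE, hs4]
    nlinarith [hspos, hs2, mul_pos hlam ha, h5]
  · intro h
    have hsq : 25 * s ^ 2 < 144 * lam ^ 2 * a ^ 2 := by
      nlinarith [mul_lt_mul_of_pos_left h hlam]
    have h5 : 5 * s < 12 * lam * a := by
      nlinarith [hsq, hspos, mul_pos hlam ha]
    have hkey : 0 < (4 * lam * a - s) * (12 * lam * a - 5 * s) :=
      mul_pos (by linarith) (by linarith)
    have hE4 : 4 * lam * a < f (f s) := by nlinarith [hkey, hE, hu0]
    nlinarith [hE4, hβ0]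
end

section
/- Let α, β ∈ (0,1), λ > 0, f(p) = p + λ(2β/p − 4(1−α)), and s = √(2λβ). If 9β/(32(1−α)²) < λ < β/(2(1−α)²), then f³(s) > β/(2(1−α)) if and only if λ > 25β/(72(1−α)²). -/
set_option maxHeartbeats 800000


/-- If `9β/(32(1−α)²) < λ < β/(2(1−α)²)`, then
`f³(s) > β/(2(1−α))` iff `λ > 25β/(72(1−α)²)`. -/
theorem stmt_18 (α β lam : ℝ) (hα : α ∈ Set.Ioo (0:ℝ) 1) (hβ : β ∈ Set.Ioo (0:ℝ) 1)
    (hlam : 0 < lam)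
    (f : ℝ → ℝ) (hf : ∀ p : ℝ, f p = p + lam * (2 * β / p - 4 * (1 - α)))
    (s : ℝ) (hs : s = Real.sqrt (2 * lam * β))
    (h1 : 9 * β / (32 * (1 - α) ^ 2) < lam) (h2 : lam < β / (2 * (1 - α) ^ 2)) :
    β / (2 * (1 - α)) < f (f (f s)) ↔ 25 * β / (72 * (1 - α) ^ 2) < lam := by
  obtain ⟨hα0, hα1⟩ := hα
  obtain ⟨hβ0, hβ1⟩ := hβ
  obtain ⟨u, hu_def⟩ : ∃ u : ℝ, u = 1 - α := ⟨_, rfl⟩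
  rw [← hu_def] at h1 h2 ⊢
  have hf' : ∀ p : ℝ, f p = p + lam * (2 * β / p - 4 * u) := by
    intro p; rw [hf, hu_def]
  have hu : 0 < u := by rw [hu_def]; linarith
  have hsq : s ^ 2 = 2 * lam * β := by
    rw [hs, Real.sq_sqrt (by positivity)]
  have hspos : 0 < s := by
    rw [hs]; exact Real.sqrt_pos.mpr (by positivity)
  have hsne : s ≠ 0 := ne_of_gt hspos
  obtain ⟨t, ht_def⟩ : ∃ t : ℝ, t = 4 * lam * u / s := ⟨_, rfl⟩
  have htpos : 0 < t := by rw [ht_def]; positivity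
  have hts : t * s = 4 * lam * u := by
    rw [ht_def]; field_simp
  have ht2 : t ^ 2 * β = 8 * lam * u ^ 2 := by
    have h : (t * s) ^ 2 = (4 * lam * u) ^ 2 := by rw [hts]
    have h2lam : (0:ℝ) < 2 * lam := by linarith
    have : 2 * lam * (t ^ 2 * β) = 2 * lam * (8 * lam * u ^ 2) := by
      linear_combination h - t ^ 2 * hsq
    exact mul_left_cancel₀ (ne_of_gt h2lam) this
  have h1' : 9 * β < 32 * lam * u ^ 2 := by
    rw [div_lt_iff₀ (by positivity)] at h1; linarith
  have h2' : 2 * lam * u ^ 2 < β := by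
    rw [lt_div_iff₀ (by positivity)] at h2; linarith
  have ht2b : 9 < 4 * t ^ 2 := by nlinarith [ht2, h1', hβ0]
  have htlo : 3 / 2 < t := by nlinarith [ht2b, htpos]
  have ht2c : t ^ 2 < 4 := by nlinarith [ht2, h2', hβ0]
  have hthi : t < 2 := by nlinarith [ht2c, htpos]
  have hD : 0 < 2 - t := by linarith
  have hN : 0 < 2 * t ^ 2 - 6 * t + 5 := by nlinarith [sq_nonneg (2 * t - 3)]
  have hrhs : (25 * β / (72 * u ^ 2) < lam) ↔ (5 / 3 < t) := by
    rw [div_lt_iff₀ (by positivity)]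
    constructor
    · intro h
      have h9 : 25 < 9 * t ^ 2 := by nlinarith [ht2, hβ0]
      nlinarith [h9, htpos]
    · intro h
      have h9 : 25 < 9 * t ^ 2 := by nlinarith [htpos]
      nlinarith [ht2, hβ0, h9]
  -- key form of f
  have hkey : ∀ p : ℝ, p ≠ 0 → f p = p + s ^ 2 / p - t * s := by
    intro p hp
    rw [hf' p, hts]
    field_simp
    ring_nf
    linear_combination -hsq
  have hf1 : f s = (2 - t) * s := by
    rw [hkey s hsne]
    field_simp
    ring
  have hp1 : (2 - t) * s ≠ 0 := by positivity
  have hf2 : f (f s) = (2 * t ^ 2 - 6 * t + 5) / (2 - t) * s := by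
    rw [hf1, hkey _ hp1]
    field_simp
    ring
  have hp2 : (2 * t ^ 2 - 6 * t + 5) / (2 - t) * s ≠ 0 := by positivity
  have hf3 : f (f (f s)) =
      ((2 * t ^ 2 - 6 * t + 5) / (2 - t) + (2 - t) / (2 * t ^ 2 - 6 * t + 5) - t) * s := by
    rw [hf2, hkey _ hp2]
    field_simp
  have hfix : β / (2 * u) = s / t := by
    rw [div_eq_div_iff (by positivity) (by positivity)]
    have h : β * t * s = s * (2 * u) * s := by
      linear_combination β * hts - 2 * u * hsq
    exact mul_right_cancel₀ hsne h
  rw [hf3, hfix, hrhs]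
  have hXdiff : ((2 * t ^ 2 - 6 * t + 5) / (2 - t) + (2 - t) / (2 * t ^ 2 - 6 * t + 5) - t) * s
      - s / t =
      (2 * (3 * t - 5) * (t - 1) ^ 4) * s / ((2 - t) * (2 * t ^ 2 - 6 * t + 5) * t) := by
    rw [div_add_div _ _ hD.ne' hN.ne', div_sub' (by positivity), div_mul_eq_mul_div, div_sub_div _ _ (by positivity) htpos.ne', div_eq_div_iff (by positivity) (by positivity)]
    ring
  have hden : 0 < (2 - t) * (2 * t ^ 2 - 6 * t + 5) * t := by positivity
  constructor
  · intro h
    by_contra hle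
    push_neg at hle
    have hnum : (2 * (3 * t - 5) * (t - 1) ^ 4) * s ≤ 0 := by
      have hq : 0 ≤ (t - 1) ^ 4 := by positivity
      nlinarith [mul_nonneg hq hspos.le]
    have hq : (2 * (3 * t - 5) * (t - 1) ^ 4) * s / ((2 - t) * (2 * t ^ 2 - 6 * t + 5) * t) ≤ 0 :=
      div_nonpos_iff.mpr (Or.inr ⟨hnum, hden.le⟩)
    rw [← hXdiff] at hq
    linarith
  · intro h
    have hnum : 0 < (2 * (3 * t - 5) * (t - 1) ^ 4) * s := by
      have h4 : 0 < (t - 1) ^ 4 := pow_pos (by linarith) 4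
      have h5 : 0 < 3 * t - 5 := by linarith
      positivity
    have hq : 0 < (2 * (3 * t - 5) * (t - 1) ^ 4) * s / ((2 - t) * (2 * t ^ 2 - 6 * t + 5) * t) :=
      div_pos hnum hden
    rw [← hXdiff] at hq
    linarith
end
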